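/- arXiv:2401.17576 — 10 statements merged into one kernel-verified Lean document; each statement's English description precedes it below -/
import Mathlib

section
/- Let k₁, k₂ > 0 and let f : ℝ → ℝ be a continuous function such that (i) sgn(x₁ − x₂)(f(x₁) − f(x₂)) ≤ k₁|x₁ − x₂| for all x₁, x₂ ≤ 0, and (ii) |f(x₁) − f(x₂)| ≤ k₂|x₁ − x₂| for all x₁, x₂ ≥ 0. Then for every x₁, x₂ ∈ ℝ and θ ∈ (0,1) with x₁ > θx₂, one has (f(x₁) − θ f(x₂))/(1−θ) ≤ (k₁ + k₂)·|(x₁ − θx₂)/(1−θ)| + (k₁ + k₂)|x₂| + f(x₂). -/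
/-- Lemma A.1: θ-difference inequality for a function satisfying a one-sided
monotonicity condition on ℝ₋ and a Lipschitz condition on ℝ₊.
Here `sgn x = 1` if `x > 0` and `-1` otherwise. -/
theorem stmt_0
    (k₁ k₂ : ℝ) (hk₁ : 0 < k₁) (hk₂ : 0 < k₂)
    (f : ℝ → ℝ) (hf : Continuous f)
    (h₁ : ∀ x₁ x₂ : ℝ, x₁ ≤ 0 → x₂ ≤ 0 →
      (if 0 < x₁ - x₂ then (1 : ℝ) else -1) * (f x₁ - f x₂) ≤ k₁ * |x₁ - x₂|)
    (h₂ : ∀ x₁ x₂ : ℝ, 0 ≤ x₁ → 0 ≤ x₂ →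
      |f x₁ - f x₂| ≤ k₂ * |x₁ - x₂|) :
    ∀ (x₁ x₂ θ : ℝ), 0 < θ → θ < 1 → θ * x₂ < x₁ →
      (f x₁ - θ * f x₂) / (1 - θ) ≤
        (k₁ + k₂) * |(x₁ - θ * x₂) / (1 - θ)| + (k₁ + k₂) * |x₂| + f x₂ := by
  intro x₁ x₂ θ hθ0 hθ1 hx
  have h1θ : (0:ℝ) < 1 - θ := by linarith
  have key : f x₁ - f x₂ ≤ (k₁ + k₂) * (x₁ - θ * x₂ + (1 - θ) * |x₂|) := by
    rcases le_or_gt x₂ 0 with hx2 | hx2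
    · have hx12 : x₂ < x₁ := lt_of_le_of_lt (by nlinarith) hx
      rw [abs_of_nonpos hx2]
      rcases le_or_gt x₁ 0 with hx1 | hx1
      · have h := h₁ x₁ x₂ hx1 hx2
        rw [if_pos (by linarith), abs_of_pos (by linarith)] at h
        nlinarith
      · have ha := h₂ x₁ 0 hx1.le le_rfl
        have ha' : f x₁ - f 0 ≤ k₂ * x₁ := by
          have := le_abs_self (f x₁ - f 0)
          rw [sub_zero, abs_of_pos hx1] at ha
          linarith
        have hb : f 0 - f x₂ ≤ k₁ * (-x₂) := by
          rcases eq_or_lt_of_le hx2 with h | h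
          · simp [h]
          · have h' := h₁ 0 x₂ le_rfl hx2
            rw [if_pos (by linarith), abs_of_pos (by linarith)] at h'
            linarith
        nlinarith
    · have hx1 : 0 < x₁ := lt_trans (by nlinarith) hx
      rw [abs_of_pos hx2]
      have h := h₂ x₁ x₂ hx1.le hx2.le
      have h' : f x₁ - f x₂ ≤ k₂ * |x₁ - x₂| :=
        le_trans (le_abs_self _) h
      have habsA : |x₁ - x₂| ≤ x₁ - θ * x₂ + (1 - θ) * x₂ := by
        rcases abs_cases (x₁ - x₂) with ⟨he, _⟩ | ⟨he, _⟩ <;> rw [he] <;> nlinarith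
      have hA : 0 ≤ x₁ - θ * x₂ + (1 - θ) * x₂ := le_trans (abs_nonneg _) habsA
      nlinarith
  rw [abs_of_pos (div_pos (by linarith) h1θ), div_le_iff₀ h1θ]
  have hne : (1 - θ) ≠ 0 := ne_of_gt h1θ
  field_simp
  nlinarith [abs_nonneg x₂, key]
end

section
/- Let a ≥ 0, k > 0, let φ : [0,∞) → [0,∞) be a nondecreasing continuous function, and let f : ℝ → ℝ be a continuous function with |f(x)| ≤ φ(|x|) for all x ∈ ℝ. Assume: (i) |f(x₁) − f(x₂)| ≤ k|x₁ − x₂| for all x₁, x₂ ∈ [−a,a]; (ii) f is convex on (−∞,−a] and convex on [a,∞); (iii) the one-sided derivatives f′₋(−a) (the derivative of f at −a from within (−∞,−a]) and f′₊(a) (the derivative of f at a from within [a,∞)) exist and are finite. Set k₀ := max(|f′₋(−a)|, |f′₊(a)|, k). Then for all x₁, x₂ ∈ ℝ and θ ∈ (0,1): (f(x₁) − θ f(x₂))/(1−θ) ≤ φ(|(x₁ − θx₂)/(1−θ)| + 2a) + 2k₀·|(x₁ − θx₂)/(1−θ)| + 11k₀a + 22φ(a). -/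
open Set Filter

set_option maxHeartbeats 1000000

lemma chord_ineq {s : Set ℝ} {f : ℝ → ℝ} (hf : ConvexOn ℝ s f) {u v w : ℝ}
    (hu : u ∈ s) (hw : w ∈ s) (huv : u ≤ v) (hvw : v ≤ w) :
    (w - u) * f v ≤ (w - v) * f u + (v - u) * f w := by
  rcases eq_or_lt_of_le huv with rfl | huv
  · nlinarith [le_refl (f u)]
  rcases eq_or_lt_of_le hvw with rfl | hvw
  · nlinarith [le_refl (f v)]
  exact hf.secant_mono_aux1 hu hw huv hvw

lemma support_right {a dp : ℝ} {f : ℝ → ℝ} (hf : ConvexOn ℝ (Set.Ici a) f)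
    (hdp : HasDerivWithinAt f dp (Set.Ici a) a) :
    ∀ z, a ≤ z → f a + dp * (z - a) ≤ f z := by
  intro z hz
  rcases eq_or_lt_of_le hz with rfl | hz
  · simp
  have ht : Tendsto (slope f a) (nhdsWithin a (Set.Ioi a)) (nhds dp) := by
    have h := hasDerivWithinAt_iff_tendsto_slope.mp hdp
    rwa [Set.Ici_sdiff_left] at h
  have h1 : dp ≤ slope f a z := by
    refine le_of_tendsto ht ?_
    filter_upwards [self_mem_nhdsWithin,
      mem_nhdsWithin_of_mem_nhds (Iio_mem_nhds hz)] with w hw hwz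
    rw [slope_def_field, slope_def_field]
    exact hf.secant_mono (self_mem_Ici) (mem_Ici.mpr (le_of_lt (mem_Ioi.mp hw))) (mem_Ici.mpr hz.le) (ne_of_gt (mem_Ioi.mp hw))
      (ne_of_gt hz) (le_of_lt hwz)
  rw [slope_def_field] at h1
  rw [le_div_iff₀ (by linarith)] at h1
  linarith

lemma support_left {a dm : ℝ} {f : ℝ → ℝ} (hf : ConvexOn ℝ (Set.Iic (-a)) f)
    (hdm : HasDerivWithinAt f dm (Set.Iic (-a)) (-a)) :
    ∀ z, z ≤ -a → f (-a) + dm * (z + a) ≤ f z := by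
  intro z hz
  rcases eq_or_lt_of_le hz with rfl | hz
  · simp
  have ht : Tendsto (slope f (-a)) (nhdsWithin (-a) (Set.Iio (-a))) (nhds dm) := by
    have h := hasDerivWithinAt_iff_tendsto_slope.mp hdm
    rwa [Set.Iic_diff_right] at h
  have h1 : slope f (-a) z ≤ dm := by
    refine ge_of_tendsto ht ?_
    filter_upwards [self_mem_nhdsWithin,
      mem_nhdsWithin_of_mem_nhds (Ioi_mem_nhds hz)] with w hw hwz
    rw [slope_def_field, slope_def_field]
    exact hf.secant_mono (self_mem_Iic) (mem_Iic.mpr hz.le)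
      (mem_Iic.mpr (le_of_lt (mem_Iio.mp hw))) (ne_of_lt hz)
      (ne_of_lt (mem_Iio.mp hw)) (le_of_lt (mem_Ioi.mp hwz))
  rw [slope_def_field] at h1
  rw [div_le_iff_of_neg (by linarith)] at h1
  linarith



section Cases

variable (a k k₀ θ x₂ y : ℝ) (φ f : ℝ → ℝ)

/-- Case: both `x₂` and `x₁` in the middle interval. -/
lemma caseMM
    (ha : 0 ≤ a) (hθ0 : 0 < θ) (hθ1 : θ < 1)
    (hk0 : 0 < k) (hkk : k ≤ k₀)
    (hφ_nonneg : ∀ x : ℝ, 0 ≤ x → 0 ≤ φ x)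
    (hφ_mono : ∀ x z : ℝ, 0 ≤ x → x ≤ z → φ x ≤ φ z)
    (hbdd : ∀ x : ℝ, |f x| ≤ φ |x|)
    (hlip : ∀ u v : ℝ, -a ≤ u → u ≤ a → -a ≤ v → v ≤ a → |f u - f v| ≤ k * |u - v|)
    (h2l : -a ≤ x₂) (h2r : x₂ ≤ a)
    (h1l : -a ≤ θ*x₂ + (1-θ)*y) (h1r : θ*x₂ + (1-θ)*y ≤ a) :
    f (θ*x₂ + (1-θ)*y) - θ * f x₂ ≤
      (1-θ) * (φ (|y| + 2*a) + 2*k₀*|y| + 11*k₀*a + 22*φ a) := by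
  set x₁ := θ*x₂ + (1-θ)*y with hx₁
  have ht : 0 < 1-θ := by linarith
  have hy1 : -|y| ≤ y := neg_abs_le y
  have hy2 : y ≤ |y| := le_abs_self y
  have hy0 : 0 ≤ |y| := abs_nonneg y
  have hφa : 0 ≤ φ a := hφ_nonneg a ha
  have hφY : 0 ≤ φ (|y| + 2*a) := hφ_nonneg _ (by linarith)
  have hk₀0 : 0 < k₀ := lt_of_lt_of_le hk0 hkk
  have h1 := hlip x₁ x₂ h1l h1r h2l h2r
  have e1 : x₁ - x₂ = (1-θ)*(y-x₂) := by rw [hx₁]; ring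
  have e2 : |x₁ - x₂| = (1-θ)*|y-x₂| := by rw [e1, abs_mul, abs_of_pos ht]
  have e3 : |y - x₂| ≤ |y| + a := by
    have h4 : |y - x₂| ≤ |y| + |x₂| := abs_sub y x₂
    have h5 : |x₂| ≤ a := abs_le.mpr ⟨h2l, h2r⟩
    linarith
  have h6 : f x₁ - f x₂ ≤ (1-θ)*(k*(|y|+a)) := by
    have h7 := (abs_le.mp h1).2
    rw [e2] at h7
    nlinarith [mul_le_mul_of_nonneg_left e3 (mul_nonneg ht.le hk0.le)]
  have h7 : f x₂ ≤ φ a :=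
    le_trans (le_trans (le_abs_self _) (hbdd x₂))
      (hφ_mono _ _ (abs_nonneg _) (abs_le.mpr ⟨h2l, h2r⟩))
  have hE : k*(|y|+a) + φ a ≤ φ (|y| + 2*a) + 2*k₀*|y| + 11*k₀*a + 22*φ a := by
    nlinarith [mul_nonneg hk₀0.le hy0, mul_nonneg hk₀0.le ha]
  have h8 : (1-θ)*(k*(|y|+a) + φ a) ≤
      (1-θ)*(φ (|y| + 2*a) + 2*k₀*|y| + 11*k₀*a + 22*φ a) :=
    mul_le_mul_of_nonneg_left hE ht.le
  nlinarith [mul_le_mul_of_nonneg_left h7 ht.le]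

end Cases



section Cases

variable (a k k₀ θ x₂ y dp : ℝ) (φ f : ℝ → ℝ)

/-- Case: `x₂ ≥ a` and `x₁ ≥ a` (right tail). -/
lemma caseRR
    (ha : 0 ≤ a) (hθ0 : 0 < θ) (hθ1 : θ < 1)
    (hk0 : 0 < k) (hkk : k ≤ k₀)
    (hφ_nonneg : ∀ x : ℝ, 0 ≤ x → 0 ≤ φ x)
    (hφ_mono : ∀ x z : ℝ, 0 ≤ x → x ≤ z → φ x ≤ φ z)
    (hbdd : ∀ x : ℝ, |f x| ≤ φ |x|)
    (hdp : |dp| ≤ k₀)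
    (hchordR : ∀ u v w : ℝ, a ≤ u → u ≤ v → v ≤ w →
      (w - u) * f v ≤ (w - v) * f u + (v - u) * f w)
    (hsupR : ∀ z : ℝ, a ≤ z → f a + dp * (z - a) ≤ f z)
    (h2 : a ≤ x₂) (h1 : a ≤ θ*x₂ + (1-θ)*y) :
    f (θ*x₂ + (1-θ)*y) - θ * f x₂ ≤
      (1-θ) * (φ (|y| + 2*a) + 2*k₀*|y| + 11*k₀*a + 22*φ a) := by
  have ht : 0 < 1-θ := by linarith
  have hy1 : -|y| ≤ y := neg_abs_le y
  have hy2 : y ≤ |y| := le_abs_self y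
  have hy0 : 0 ≤ |y| := abs_nonneg y
  have hφa : 0 ≤ φ a := hφ_nonneg a ha
  have hφy : 0 ≤ φ |y| := hφ_nonneg _ hy0
  have hφY : 0 ≤ φ (|y| + 2*a) := hφ_nonneg _ (by linarith)
  have hφyY : φ |y| ≤ φ (|y| + 2*a) := hφ_mono _ _ hy0 (by linarith)
  have hk₀0 : 0 < k₀ := lt_of_lt_of_le hk0 hkk
  have hfy : f y ≤ φ |y| := le_trans (le_abs_self _) (hbdd y)
  rcases le_or_gt a y with hy | hy
  · -- pure convexity
    rcases lt_trichotomy x₂ y with hlt | heq | hgt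
    · have hx12 : x₂ ≤ θ*x₂ + (1-θ)*y := by nlinarith
      have hx1y : θ*x₂ + (1-θ)*y ≤ y := by nlinarith
      have H := hchordR x₂ (θ*x₂ + (1-θ)*y) y h2 hx12 hx1y
      have hc : ((1-θ)*(y - x₂)) * f y ≤ ((1-θ)*(y - x₂)) * (φ |y|) :=
        mul_le_mul_of_nonneg_left hfy (by nlinarith)
      have Hbig : (y - x₂)*(f (θ*x₂ + (1-θ)*y) - θ*f x₂) ≤ (y - x₂)*((1-θ)*(φ |y|)) := by
        nlinarith [H, hc]
      have hdiv := le_of_mul_le_mul_left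
        (by linarith [Hbig] : (y - x₂)*(f (θ*x₂ + (1-θ)*y) - θ*f x₂) ≤ (y - x₂)*((1-θ)*(φ |y|)))
        (by linarith : (0:ℝ) < y - x₂)
      have hE : φ |y| ≤ φ (|y| + 2*a) + 2*k₀*|y| + 11*k₀*a + 22*φ a := by
        nlinarith [mul_nonneg hk₀0.le hy0, mul_nonneg hk₀0.le ha]
      nlinarith [mul_le_mul_of_nonneg_left hE ht.le]
    · have hx1 : θ*x₂ + (1-θ)*y = x₂ := by rw [← heq]; ring
      rw [hx1]
      have hfx2 : f x₂ ≤ φ |y| := by rw [← heq]; exact le_trans (le_abs_self _) (hbdd x₂)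
      nlinarith [mul_le_mul_of_nonneg_left (le_trans hfx2 hφyY) ht.le,
        mul_nonneg (mul_nonneg hk₀0.le hy0) ht.le, mul_nonneg (mul_nonneg hk₀0.le ha) ht.le,
        mul_nonneg hφa ht.le]
    · have hxy1 : y ≤ θ*x₂ + (1-θ)*y := by nlinarith
      have hx12 : θ*x₂ + (1-θ)*y ≤ x₂ := by nlinarith
      have H := hchordR y (θ*x₂ + (1-θ)*y) x₂ hy hxy1 hx12
      have hc : ((1-θ)*(x₂ - y)) * f y ≤ ((1-θ)*(x₂ - y)) * (φ |y|) :=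
        mul_le_mul_of_nonneg_left hfy (by nlinarith)
      have Hbig : (x₂ - y)*(f (θ*x₂ + (1-θ)*y) - θ*f x₂) ≤ (x₂ - y)*((1-θ)*(φ |y|)) := by
        nlinarith [H, hc]
      have hdiv := le_of_mul_le_mul_left Hbig (by linarith : (0:ℝ) < x₂ - y)
      have hE : φ |y| ≤ φ (|y| + 2*a) + 2*k₀*|y| + 11*k₀*a + 22*φ a := by
        nlinarith [mul_nonneg hk₀0.le hy0, mul_nonneg hk₀0.le ha]
      nlinarith [mul_le_mul_of_nonneg_left hE ht.le]
  · -- y < a: x₁ between a and x₂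
    have hx12 : θ*x₂ + (1-θ)*y ≤ x₂ := by nlinarith
    rcases eq_or_lt_of_le h2 with heq | h2'
    · -- x₂ = a, so x₁ = a
      have hx1 : θ*x₂ + (1-θ)*y = a := le_antisymm (heq ▸ hx12) h1
      rw [hx1, ← heq]
      have hfa : f a ≤ φ a := by
        have := hbdd a
        rw [abs_of_nonneg ha] at this
        exact le_trans (le_abs_self _) this
      nlinarith [mul_le_mul_of_nonneg_left hfa ht.le,
        mul_nonneg (mul_nonneg hk₀0.le hy0) ht.le, mul_nonneg (mul_nonneg hk₀0.le ha) ht.le,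
        mul_nonneg hφa ht.le, mul_nonneg hφY ht.le]
    · have H := hchordR a (θ*x₂ + (1-θ)*y) x₂ (le_refl a) h1 hx12
      have hsup := hsupR x₂ h2
      have hc : ((1-θ)*(y-a))*(f x₂) ≤ ((1-θ)*(y-a))*(f a + dp*(x₂-a)) :=
        mul_le_mul_of_nonpos_left hsup (by nlinarith)
      have hfa : f a ≤ φ a := by
        have := hbdd a
        rw [abs_of_nonneg ha] at this
        exact le_trans (le_abs_self _) this
      have hfa2 : ((1-θ)*(x₂-a))*(f a) ≤ ((1-θ)*(x₂-a))*(φ a) :=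
        mul_le_mul_of_nonneg_left hfa (by nlinarith)
      have hdm := abs_le.mp hdp
      have hdp2 : (y-a)*dp ≤ (a-y)*k₀ := by nlinarith
      have hdp3 : ((1-θ)*(x₂-a))*((y-a)*dp) ≤ ((1-θ)*(x₂-a))*((a-y)*k₀) :=
        mul_le_mul_of_nonneg_left hdp2 (by nlinarith)
      have Hbig : (x₂-a)*(f (θ*x₂ + (1-θ)*y) - θ*f x₂)
          ≤ (x₂-a)*((1-θ)*(φ a + k₀*(a-y))) := by
        nlinarith [H, hc, hfa2, hdp3]
      have hdiv := le_of_mul_le_mul_left Hbig (by linarith : (0:ℝ) < x₂ - a)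
      have hE : φ a + k₀*(a-y) ≤ φ (|y| + 2*a) + 2*k₀*|y| + 11*k₀*a + 22*φ a := by
        nlinarith [mul_nonneg hk₀0.le hy0, mul_nonneg hk₀0.le ha]
      nlinarith [mul_le_mul_of_nonneg_left hE ht.le]

/-- Case: `x₂ ≥ a`, `x₁` in the middle interval. -/
lemma caseRM
    (ha : 0 ≤ a) (hθ0 : 0 < θ) (hθ1 : θ < 1)
    (hk0 : 0 < k) (hkk : k ≤ k₀)
    (hφ_nonneg : ∀ x : ℝ, 0 ≤ x → 0 ≤ φ x)
    (hφ_mono : ∀ x z : ℝ, 0 ≤ x → x ≤ z → φ x ≤ φ z)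
    (hbdd : ∀ x : ℝ, |f x| ≤ φ |x|)
    (hlip : ∀ u v : ℝ, -a ≤ u → u ≤ a → -a ≤ v → v ≤ a → |f u - f v| ≤ k * |u - v|)
    (hdp : |dp| ≤ k₀)
    (hsupR : ∀ z : ℝ, a ≤ z → f a + dp * (z - a) ≤ f z)
    (h2 : a ≤ x₂) (h1l : -a ≤ θ*x₂ + (1-θ)*y) (h1r : θ*x₂ + (1-θ)*y ≤ a) :
    f (θ*x₂ + (1-θ)*y) - θ * f x₂ ≤
      (1-θ) * (φ (|y| + 2*a) + 2*k₀*|y| + 11*k₀*a + 22*φ a) := by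
  have ht : 0 < 1-θ := by linarith
  have hy1 : -|y| ≤ y := neg_abs_le y
  have hy2 : y ≤ |y| := le_abs_self y
  have hy0 : 0 ≤ |y| := abs_nonneg y
  have hφa : 0 ≤ φ a := hφ_nonneg a ha
  have hφY : 0 ≤ φ (|y| + 2*a) := hφ_nonneg _ (by linarith)
  have hk₀0 : 0 < k₀ := lt_of_lt_of_le hk0 hkk
  have hs := hsupR x₂ h2
  have hl := hlip (θ*x₂ + (1-θ)*y) a h1l h1r (by linarith) (le_refl a)
  have h3 : f (θ*x₂ + (1-θ)*y) - f a ≤ k*(a - (θ*x₂ + (1-θ)*y)) := by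
    have h4 := (abs_le.mp hl).2
    rw [abs_of_nonpos (by linarith : θ*x₂ + (1-θ)*y - a ≤ 0)] at h4
    linarith
  have hdm := abs_le.mp hdp
  have h5 : θ*(f a + dp*(x₂ - a)) ≤ θ*f x₂ := mul_le_mul_of_nonneg_left hs hθ0.le
  have h6 : θ*((-k₀)*(x₂-a)) ≤ θ*(dp*(x₂-a)) :=
    mul_le_mul_of_nonneg_left (mul_le_mul_of_nonneg_right hdm.1 (by linarith)) hθ0.le
  have hfa : f a ≤ φ a := by
    have := hbdd a
    rw [abs_of_nonneg ha] at this
    exact le_trans (le_abs_self _) this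
  have h7 : k*(a - (θ*x₂ + (1-θ)*y)) ≤ k₀*(a - (θ*x₂ + (1-θ)*y)) :=
    mul_le_mul_of_nonneg_right hkk (by linarith)
  have hE : φ a + k₀*(a + |y|) ≤ φ (|y| + 2*a) + 2*k₀*|y| + 11*k₀*a + 22*φ a := by
    nlinarith [mul_nonneg hk₀0.le hy0, mul_nonneg hk₀0.le ha]
  have h8 := mul_le_mul_of_nonneg_left hE ht.le
  have h9 : k₀*((1-θ)*(a-y)) ≤ k₀*((1-θ)*(a+|y|)) :=
    mul_le_mul_of_nonneg_left
      (mul_le_mul_of_nonneg_left (by linarith : a - y ≤ a + |y|) ht.le) hk₀0.le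
  have hfa' := mul_le_mul_of_nonneg_left hfa ht.le
  nlinarith [h3, h5, h6, h7, h8, h9, hfa']

/-- Case: `x₂` in the middle, `x₁ > a`. -/
lemma caseMR
    (ha : 0 ≤ a) (hθ0 : 0 < θ) (hθ1 : θ < 1)
    (hk0 : 0 < k) (hkk : k ≤ k₀)
    (hφ_nonneg : ∀ x : ℝ, 0 ≤ x → 0 ≤ φ x)
    (hφ_mono : ∀ x z : ℝ, 0 ≤ x → x ≤ z → φ x ≤ φ z)
    (hbdd : ∀ x : ℝ, |f x| ≤ φ |x|)
    (hlip : ∀ u v : ℝ, -a ≤ u → u ≤ a → -a ≤ v → v ≤ a → |f u - f v| ≤ k * |u - v|)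
    (hchordR : ∀ u v w : ℝ, a ≤ u → u ≤ v → v ≤ w →
      (w - u) * f v ≤ (w - v) * f u + (v - u) * f w)
    (h2l : -a ≤ x₂) (h2r : x₂ ≤ a) (h1 : a < θ*x₂ + (1-θ)*y) :
    f (θ*x₂ + (1-θ)*y) - θ * f x₂ ≤
      (1-θ) * (φ (|y| + 2*a) + 2*k₀*|y| + 11*k₀*a + 22*φ a) := by
  have ht : 0 < 1-θ := by linarith
  have hy1 : -|y| ≤ y := neg_abs_le y
  have hy2 : y ≤ |y| := le_abs_self y
  have hy0 : 0 ≤ |y| := abs_nonneg y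
  have hφa : 0 ≤ φ a := hφ_nonneg a ha
  have hφy : 0 ≤ φ |y| := hφ_nonneg _ hy0
  have hφY : 0 ≤ φ (|y| + 2*a) := hφ_nonneg _ (by linarith)
  have hφyY : φ |y| ≤ φ (|y| + 2*a) := hφ_mono _ _ hy0 (by linarith)
  have hk₀0 : 0 < k₀ := lt_of_lt_of_le hk0 hkk
  have hfy : f y ≤ φ |y| := le_trans (le_abs_self _) (hbdd y)
  have hyx2 : x₂ < y := by
    by_contra hcon
    push_neg at hcon
    nlinarith [mul_nonneg ht.le (sub_nonneg.mpr hcon)]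
  have hXy : θ*x₂ + (1-θ)*y ≤ y := by nlinarith
  have hay : a < y := lt_of_lt_of_le h1 hXy
  have H := hchordR a (θ*x₂ + (1-θ)*y) y (le_refl a) h1.le hXy
  have hlipax2 := hlip a x₂ (by linarith) (le_refl a) h2l h2r
  have hfx2 : f x₂ ≤ φ a :=
    le_trans (le_trans (le_abs_self _) (hbdd x₂))
      (hφ_mono _ _ (abs_nonneg _) (abs_le.mpr ⟨h2l, h2r⟩))
  have hfx2n : -(φ a) ≤ f x₂ := by
    have h0 := (abs_le.mp (hbdd x₂)).1
    have h1' : φ |x₂| ≤ φ a := hφ_mono _ _ (abs_nonneg _) (abs_le.mpr ⟨h2l, h2r⟩)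
    linarith
  have hA1 : f a - f x₂ ≤ k*((1-θ)*(y-x₂)) := by
    have h4 := (abs_le.mp hlipax2).2
    rw [abs_of_nonneg (by linarith : (0:ℝ) ≤ a - x₂)] at h4
    nlinarith [mul_le_mul_of_nonneg_left
      (show a - x₂ ≤ (1-θ)*(y-x₂) by nlinarith) hk0.le]
  have hA : f a - θ*f x₂ ≤ (1-θ)*(k*(y-x₂) + φ a) := by
    nlinarith [mul_le_mul_of_nonneg_left hfx2 ht.le]
  have hAnn : 0 ≤ (1-θ)*(k*(y-x₂) + φ a) :=
    mul_nonneg ht.le (by nlinarith [mul_nonneg hk0.le (sub_nonneg.mpr hyx2.le)])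
  have hA2 : (y - (θ*x₂ + (1-θ)*y))*(f a - θ*f x₂) ≤ (y-a)*((1-θ)*(k*(y-x₂) + φ a)) :=
    calc (y - (θ*x₂ + (1-θ)*y))*(f a - θ*f x₂)
        ≤ (y - (θ*x₂ + (1-θ)*y))*((1-θ)*(k*(y-x₂) + φ a)) :=
          mul_le_mul_of_nonneg_left hA (by linarith)
      _ ≤ (y-a)*((1-θ)*(k*(y-x₂) + φ a)) :=
          mul_le_mul_of_nonneg_right (by linarith) hAnn
  have hB : f y - θ*f x₂ ≤ φ |y| + φ a := by
    nlinarith [mul_le_mul_of_nonneg_left hfx2n hθ0.le]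
  have hBnn : (0:ℝ) ≤ φ |y| + φ a := by linarith
  have hB2 : ((θ*x₂ + (1-θ)*y) - a)*(f y - θ*f x₂) ≤ ((1-θ)*(y-a))*(φ |y| + φ a) :=
    calc ((θ*x₂ + (1-θ)*y) - a)*(f y - θ*f x₂)
        ≤ ((θ*x₂ + (1-θ)*y) - a)*(φ |y| + φ a) :=
          mul_le_mul_of_nonneg_left hB (by linarith)
      _ ≤ ((1-θ)*(y-a))*(φ |y| + φ a) :=
          mul_le_mul_of_nonneg_right
            (by nlinarith [mul_nonneg hθ0.le (sub_nonneg.mpr h2r)]) hBnn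
  have Hbig : (y-a)*(f (θ*x₂ + (1-θ)*y) - θ*f x₂)
      ≤ (y-a)*((1-θ)*(k*(y-x₂) + 2*φ a + φ |y|)) := by
    nlinarith [H, hA2, hB2]
  have hdiv := le_of_mul_le_mul_left Hbig (by linarith : (0:ℝ) < y - a)
  have hE : k*(y-x₂) + 2*φ a + φ |y| ≤ φ (|y| + 2*a) + 2*k₀*|y| + 11*k₀*a + 22*φ a := by
    nlinarith [mul_nonneg (sub_nonneg.mpr hkk) hy0, mul_nonneg hk0.le ha,
      mul_nonneg hk₀0.le hy0, mul_nonneg hk₀0.le ha,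
      mul_le_mul_of_nonneg_left (show y - x₂ ≤ |y| + a by linarith) hk0.le]
  exact le_trans hdiv (mul_le_mul_of_nonneg_left hE ht.le)

/-- Case: `x₂ ≥ a`, `x₁ ≤ -a`. -/
lemma caseRL
    (ha : 0 ≤ a) (hθ0 : 0 < θ) (hθ1 : θ < 1)
    (hk0 : 0 < k) (hkk : k ≤ k₀)
    (hφ_nonneg : ∀ x : ℝ, 0 ≤ x → 0 ≤ φ x)
    (hφ_mono : ∀ x z : ℝ, 0 ≤ x → x ≤ z → φ x ≤ φ z)
    (hbdd : ∀ x : ℝ, |f x| ≤ φ |x|)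
    (hlip : ∀ u v : ℝ, -a ≤ u → u ≤ a → -a ≤ v → v ≤ a → |f u - f v| ≤ k * |u - v|)
    (hdp : |dp| ≤ k₀)
    (hchordL : ∀ u v w : ℝ, u ≤ v → v ≤ w → w ≤ -a →
      (w - u) * f v ≤ (w - v) * f u + (v - u) * f w)
    (hsupR : ∀ z : ℝ, a ≤ z → f a + dp * (z - a) ≤ f z)
    (h2 : a ≤ x₂) (h1 : θ*x₂ + (1-θ)*y ≤ -a) :
    f (θ*x₂ + (1-θ)*y) - θ * f x₂ ≤
      (1-θ) * (φ (|y| + 2*a) + 2*k₀*|y| + 11*k₀*a + 22*φ a) := by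
  have ht : 0 < 1-θ := by linarith
  have hy1 : -|y| ≤ y := neg_abs_le y
  have hy2 : y ≤ |y| := le_abs_self y
  have hy0 : 0 ≤ |y| := abs_nonneg y
  have hφa : 0 ≤ φ a := hφ_nonneg a ha
  have hφy : 0 ≤ φ |y| := hφ_nonneg _ hy0
  have hφY : 0 ≤ φ (|y| + 2*a) := hφ_nonneg _ (by linarith)
  have hφyY : φ |y| ≤ φ (|y| + 2*a) := hφ_mono _ _ hy0 (by linarith)
  have hk₀0 : 0 < k₀ := lt_of_lt_of_le hk0 hkk
  have hfy : f y ≤ φ |y| := le_trans (le_abs_self _) (hbdd y)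
  have hfma : f (-a) ≤ φ a := by
    have := hbdd (-a)
    rw [abs_neg, abs_of_nonneg ha] at this
    exact le_trans (le_abs_self _) this
  have hx2X : θ*x₂ + (1-θ)*y ≤ x₂ := by linarith
  have hyX : y ≤ θ*x₂ + (1-θ)*y := by
    by_contra hcon
    push_neg at hcon
    nlinarith [mul_nonneg hθ0.le (sub_nonneg.mpr hx2X)]
  rcases lt_or_ge y (-a) with hya | hya
  · have H := hchordL y (θ*x₂ + (1-θ)*y) (-a) hyX h1 (le_refl (-a))
    have hsup := hsupR x₂ h2
    have hlipa := hlip a (-a) (by linarith) (le_refl a) (le_refl (-a)) (by linarith)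
    have hl2 : f (-a) - f a ≤ k*(2*a) := by
      have h4 := (abs_le.mp hlipa).1
      have h5 : |a - -a| = 2*a := by rw [abs_of_nonneg (by linarith)]; ring
      rw [h5] at h4
      linarith
    have hdm := abs_le.mp hdp
    have u1 : θ*(f a + dp*(x₂-a)) ≤ θ*f x₂ := mul_le_mul_of_nonneg_left hsup hθ0.le
    have u2 : θ*((-k₀)*(x₂-a)) ≤ θ*(dp*(x₂-a)) :=
      mul_le_mul_of_nonneg_left (mul_le_mul_of_nonneg_right hdm.1 (by linarith)) hθ0.le
    have u3 : θ*(f (-a) - f a) ≤ θ*(k*(2*a)) := mul_le_mul_of_nonneg_left hl2 hθ0.le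
    have key : θ*(x₂ + a) ≤ (1-θ)*(-a - y) := by nlinarith
    have key0 : (0:ℝ) ≤ θ*(x₂+a) := mul_nonneg hθ0.le (by linarith)
    have k2a : θ*(k*(2*a)) ≤ k₀*((1-θ)*(-a-y)) := by
      have e1 : θ*(2*a) ≤ θ*(x₂+a) := mul_le_mul_of_nonneg_left (by linarith) hθ0.le
      have e2 : k*(θ*(2*a)) ≤ k*(θ*(x₂+a)) := mul_le_mul_of_nonneg_left e1 hk0.le
      have e3 : k*(θ*(x₂+a)) ≤ k₀*(θ*(x₂+a)) := mul_le_mul_of_nonneg_right hkk key0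
      have e4 : k₀*(θ*(x₂+a)) ≤ k₀*((1-θ)*(-a-y)) := mul_le_mul_of_nonneg_left key hk₀0.le
      nlinarith [e2, e3, e4]
    have kxa : θ*(k₀*(x₂-a)) ≤ k₀*((1-θ)*(-a-y)) := by
      have e1 : θ*(x₂-a) ≤ θ*(x₂+a) := mul_le_mul_of_nonneg_left (by linarith) hθ0.le
      have e2 : k₀*(θ*(x₂-a)) ≤ k₀*(θ*(x₂+a)) := mul_le_mul_of_nonneg_left e1 hk₀0.le
      have e3 : k₀*(θ*(x₂+a)) ≤ k₀*((1-θ)*(-a-y)) := mul_le_mul_of_nonneg_left key hk₀0.le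
      nlinarith [e2, e3]
    have hD : (0:ℝ) < -a - y := by linarith
    have t1 : (-a - (θ*x₂ + (1-θ)*y))*f y ≤ ((1-θ)*(-a-y))*(φ |y|) := by
      have c3 : -a - (θ*x₂ + (1-θ)*y) ≤ (1-θ)*(-a-y) := by
        nlinarith [mul_nonneg hθ0.le (sub_nonneg.mpr h2), mul_nonneg hθ0.le ha]
      calc (-a - (θ*x₂ + (1-θ)*y))*f y ≤ (-a - (θ*x₂ + (1-θ)*y))*(φ |y|) :=
            mul_le_mul_of_nonneg_left hfy (by linarith)
        _ ≤ ((1-θ)*(-a-y))*(φ |y|) := mul_le_mul_of_nonneg_right c3 hφy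
    have t2 : (θ*(x₂+a))*f (-a) ≤ ((1-θ)*(-a-y))*(φ a) :=
      calc (θ*(x₂+a))*f (-a) ≤ (θ*(x₂+a))*(φ a) := mul_le_mul_of_nonneg_left hfma key0
        _ ≤ ((1-θ)*(-a-y))*(φ a) := mul_le_mul_of_nonneg_right key hφa
    have u6 : -(θ*f x₂) ≤ -(θ*f (-a)) + 2*(k₀*((1-θ)*(-a-y))) := by
      nlinarith [u1, u2, u3, k2a, kxa]
    have u7 : (-a-y)*(-(θ*f x₂)) ≤ (-a-y)*(-(θ*f (-a)) + 2*(k₀*((1-θ)*(-a-y)))) :=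
      mul_le_mul_of_nonneg_left u6 hD.le
    have Hbig : (-a-y)*(f (θ*x₂ + (1-θ)*y) - θ*f x₂)
        ≤ (-a-y)*((1-θ)*(φ |y| + φ a + 2*(k₀*(-a-y)))) := by
      nlinarith [H, u7, t1, t2]
    have hdiv := le_of_mul_le_mul_left Hbig hD
    have habs : -y = |y| := (abs_of_neg (by linarith : y < 0)).symm
    have hE : φ |y| + φ a + 2*(k₀*(-a-y)) ≤ φ (|y| + 2*a) + 2*k₀*|y| + 11*k₀*a + 22*φ a := by
      nlinarith [mul_nonneg hk₀0.le ha, mul_nonneg hk₀0.le hy0]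
    exact le_trans hdiv (mul_le_mul_of_nonneg_left hE ht.le)
  · -- degenerate: y = x₁ = -a, x₂ = -a
    have h9 : y = -a := le_antisymm (le_trans hyX h1) hya
    have h10 : θ*x₂ + (1-θ)*y = -a := le_antisymm h1 (h9 ▸ hyX)
    have h11 : x₂ = -a := by
      have h12 : θ*x₂ = θ*(-a) := by
        rw [h9] at h10
        linarith [h10]
      exact mul_left_cancel₀ (ne_of_gt hθ0) h12
    rw [h10, h11]
    nlinarith [mul_le_mul_of_nonneg_left hfma ht.le,
      mul_nonneg (mul_nonneg hk₀0.le hy0) ht.le, mul_nonneg (mul_nonneg hk₀0.le ha) ht.le,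
      mul_nonneg hφa ht.le, mul_nonneg hφY ht.le]

end Cases

/-- Lemma A.2: θ-difference inequality for a function that is Lipschitz on
`[-a, a]`, convex on the two half-lines `(-∞, -a]` and `[a, ∞)`, has finite
one-sided derivatives at `-a` (from the left half-line) and at `a` (from the
right half-line), and is dominated by a nondecreasing function `φ`. -/
theorem stmt_1
    (a k : ℝ) (ha : 0 ≤ a) (hk : 0 < k)
    (φ : ℝ → ℝ)
    (hφ_nonneg : ∀ x : ℝ, 0 ≤ x → 0 ≤ φ x)
    (hφ_mono : ∀ x y : ℝ, 0 ≤ x → x ≤ y → φ x ≤ φ y)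
    (hφ_cont : ContinuousOn φ (Set.Ici (0 : ℝ)))
    (f : ℝ → ℝ) (hf_cont : Continuous f)
    (hf_bdd : ∀ x : ℝ, |f x| ≤ φ |x|)
    (hf_lip : ∀ x₁ x₂ : ℝ, x₁ ∈ Set.Icc (-a) a → x₂ ∈ Set.Icc (-a) a →
      |f x₁ - f x₂| ≤ k * |x₁ - x₂|)
    (hf_conv_left : ConvexOn ℝ (Set.Iic (-a)) f)
    (hf_conv_right : ConvexOn ℝ (Set.Ici a) f)
    (dm dp : ℝ)
    (hdm : HasDerivWithinAt f dm (Set.Iic (-a)) (-a))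
    (hdp : HasDerivWithinAt f dp (Set.Ici a) a)
    (k₀ : ℝ) (hk₀ : k₀ = max (max |dm| |dp|) k) :
    ∀ (x₁ x₂ θ : ℝ), 0 < θ → θ < 1 →
      (f x₁ - θ * f x₂) / (1 - θ) ≤
        φ (|(x₁ - θ * x₂) / (1 - θ)| + 2 * a)
          + 2 * k₀ * |(x₁ - θ * x₂) / (1 - θ)| + 11 * k₀ * a + 22 * φ a := by
  intro x₁ x₂ θ hθ0 hθ1
  have ht : 0 < 1 - θ := by linarith
  set y := (x₁ - θ * x₂) / (1 - θ) with hy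
  have hx₁ : x₁ = θ*x₂ + (1-θ)*y := by
    rw [hy]
    field_simp
    ring
  rw [div_le_iff₀ ht]
  have hkk : k ≤ k₀ := hk₀ ▸ le_max_right _ _
  have hdmk : |dm| ≤ k₀ := hk₀ ▸ le_trans (le_max_left _ _) (le_max_left _ _)
  have hdpk : |dp| ≤ k₀ := hk₀ ▸ le_trans (le_max_right _ _) (le_max_left _ _)
  have hdmk' : |(-dm)| ≤ k₀ := by rwa [abs_neg]
  have hlip' : ∀ u v : ℝ, -a ≤ u → u ≤ a → -a ≤ v → v ≤ a → |f u - f v| ≤ k*|u-v| :=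
    fun u v h1 h2 h3 h4 => hf_lip u v ⟨h1, h2⟩ ⟨h3, h4⟩
  have hchordR : ∀ u v w : ℝ, a ≤ u → u ≤ v → v ≤ w →
      (w-u)*f v ≤ (w-v)*f u + (v-u)*f w :=
    fun u v w hu huv hvw =>
      chord_ineq hf_conv_right hu (le_trans hu (le_trans huv hvw)) huv hvw
  have hchordL : ∀ u v w : ℝ, u ≤ v → v ≤ w → w ≤ -a →
      (w-u)*f v ≤ (w-v)*f u + (v-u)*f w :=
    fun u v w huv hvw hw =>
      chord_ineq hf_conv_left (le_trans (le_trans huv hvw) hw) hw huv hvw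
  have hsupR := support_right hf_conv_right hdp
  have hsupL := support_left hf_conv_left hdm
  -- mirrored data for x ↦ f (-x)
  have hbddg : ∀ x : ℝ, |(fun t => f (-t)) x| ≤ φ |x| := fun x => by
    simpa [abs_neg] using hf_bdd (-x)
  have hlipg : ∀ u v : ℝ, -a ≤ u → u ≤ a → -a ≤ v → v ≤ a →
      |(fun t => f (-t)) u - (fun t => f (-t)) v| ≤ k*|u-v| := by
    intro u v h1 h2 h3 h4
    show |f (-u) - f (-v)| ≤ k*|u-v|
    have h5 := hlip' (-u) (-v) (by linarith) (by linarith) (by linarith) (by linarith)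
    have h6 : |(-u) - (-v)| = |u - v| := by rw [neg_sub_neg, abs_sub_comm]
    rwa [h6] at h5
  have hchordRg : ∀ u v w : ℝ, a ≤ u → u ≤ v → v ≤ w →
      (w-u)*(fun t => f (-t)) v ≤ (w-v)*(fun t => f (-t)) u + (v-u)*(fun t => f (-t)) w := by
    intro u v w hu huv hvw
    show (w-u)*f (-v) ≤ (w-v)*f (-u) + (v-u)*f (-w)
    have h5 := hchordL (-w) (-v) (-u) (by linarith) (by linarith) (by linarith)
    nlinarith [h5]
  have hchordLg : ∀ u v w : ℝ, u ≤ v → v ≤ w → w ≤ -a →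
      (w-u)*(fun t => f (-t)) v ≤ (w-v)*(fun t => f (-t)) u + (v-u)*(fun t => f (-t)) w := by
    intro u v w huv hvw hw
    show (w-u)*f (-v) ≤ (w-v)*f (-u) + (v-u)*f (-w)
    have h5 := hchordR (-w) (-v) (-u) (by linarith) (by linarith) (by linarith)
    nlinarith [h5]
  have hsupRg : ∀ z : ℝ, a ≤ z → (fun t => f (-t)) a + (-dm)*(z-a) ≤ (fun t => f (-t)) z := by
    intro z hz
    show f (-a) + (-dm)*(z-a) ≤ f (-z)
    have h5 := hsupL (-z) (by linarith)
    nlinarith [h5]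
  have hx₁' : -x₁ = θ*(-x₂) + (1-θ)*(-y) := by rw [hx₁]; ring
  rcases le_or_gt x₂ (-a) with h2L | h2'
  · -- x₂ in the left tail : mirrored configurations
    rcases le_or_gt x₁ (-a) with h1L | h1'
    · have h := caseRR (a := a) (k := k) (k₀ := k₀) (θ := θ) (x₂ := -x₂) (y := -y)
        (dp := -dm) (φ := φ) (f := fun t => f (-t)) ha hθ0 hθ1 hk hkk hφ_nonneg hφ_mono
        hbddg hdmk' hchordRg hsupRg (by linarith) (by rw [← hx₁']; linarith)
      rw [← hx₁'] at h
      simp only [neg_neg, abs_neg] at h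
      linarith [h]
    · rcases le_or_gt x₁ a with h1M | h1R
      · have h := caseRM (a := a) (k := k) (k₀ := k₀) (θ := θ) (x₂ := -x₂) (y := -y)
          (dp := -dm) (φ := φ) (f := fun t => f (-t)) ha hθ0 hθ1 hk hkk hφ_nonneg hφ_mono
          hbddg hlipg hdmk' hsupRg (by linarith) (by rw [← hx₁']; linarith)
          (by rw [← hx₁']; linarith)
        rw [← hx₁'] at h
        simp only [neg_neg, abs_neg] at h
        linarith [h]
      · have h := caseRL (a := a) (k := k) (k₀ := k₀) (θ := θ) (x₂ := -x₂) (y := -y)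
          (dp := -dm) (φ := φ) (f := fun t => f (-t)) ha hθ0 hθ1 hk hkk hφ_nonneg hφ_mono
          hbddg hlipg hdmk' hchordLg hsupRg (by linarith) (by rw [← hx₁']; linarith)
        rw [← hx₁'] at h
        simp only [neg_neg, abs_neg] at h
        linarith [h]
  · rcases le_or_gt a x₂ with h2R | h2M
    · -- x₂ in the right tail
      rcases le_or_gt a x₁ with h1R | h1'
      · have h := caseRR (a := a) (k := k) (k₀ := k₀) (θ := θ) (x₂ := x₂) (y := y)
          (dp := dp) (φ := φ) (f := f) ha hθ0 hθ1 hk hkk hφ_nonneg hφ_mono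
          hf_bdd hdpk hchordR hsupR h2R (by rw [← hx₁]; exact h1R)
        rw [← hx₁] at h
        linarith [h]
      · rcases le_or_gt (-a) x₁ with h1M | h1L
        · have h := caseRM (a := a) (k := k) (k₀ := k₀) (θ := θ) (x₂ := x₂) (y := y)
            (dp := dp) (φ := φ) (f := f) ha hθ0 hθ1 hk hkk hφ_nonneg hφ_mono
            hf_bdd hlip' hdpk hsupR h2R (by rw [← hx₁]; exact h1M)
            (by rw [← hx₁]; linarith)
          rw [← hx₁] at h
          linarith [h]
        · have h := caseRL (a := a) (k := k) (k₀ := k₀) (θ := θ) (x₂ := x₂) (y := y)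
            (dp := dp) (φ := φ) (f := f) ha hθ0 hθ1 hk hkk hφ_nonneg hφ_mono
            hf_bdd hlip' hdpk hchordL hsupR h2R (by rw [← hx₁]; linarith)
          rw [← hx₁] at h
          linarith [h]
    · -- x₂ in the middle
      rcases le_or_gt x₁ a with h1le | h1R
      · rcases le_or_gt (-a) x₁ with h1M | h1L
        · have h := caseMM (a := a) (k := k) (k₀ := k₀) (θ := θ) (x₂ := x₂) (y := y)
            (φ := φ) (f := f) ha hθ0 hθ1 hk hkk hφ_nonneg hφ_mono hf_bdd hlip'
            (by linarith) (by linarith) (by rw [← hx₁]; exact h1M) (by rw [← hx₁]; exact h1le)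
          rw [← hx₁] at h
          linarith [h]
        · have h := caseMR (a := a) (k := k) (k₀ := k₀) (θ := θ) (x₂ := -x₂) (y := -y)
            (φ := φ) (f := fun t => f (-t)) ha hθ0 hθ1 hk hkk hφ_nonneg hφ_mono
            hbddg hlipg hchordRg (by linarith) (by linarith) (by rw [← hx₁']; linarith)
          rw [← hx₁'] at h
          simp only [neg_neg, abs_neg] at h
          linarith [h]
      · have h := caseMR (a := a) (k := k) (k₀ := k₀) (θ := θ) (x₂ := x₂) (y := y)
          (φ := φ) (f := f) ha hθ0 hθ1 hk hkk hφ_nonneg hφ_mono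
          hf_bdd hlip' hchordR (by linarith) (by linarith) (by rw [← hx₁]; exact h1R)
        rw [← hx₁] at h
        linarith [h]
end

section
/- Let a ≥ 0, k > 0, let φ : [0,∞) → [0,∞) be a nondecreasing continuous function, and let f : ℝ → ℝ be a continuous function with |f(x)| ≤ φ(|x|) for all x ∈ ℝ. Assume: (i) |f(x₁) − f(x₂)| ≤ k|x₁ − x₂| for all x₁, x₂ ∈ ℝ; (ii) f is nonincreasing on (−∞,−a] and nondecreasing on [a,∞). Then for all x₁, x₂ ∈ ℝ and θ ∈ (0,1): (f(x₁) − θ f(x₂))/(1−θ) ≤ 4k·|(x₁ − θx₂)/(1−θ)| + 4ka + 11φ(a) + φ(|x₂|). -/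
set_option maxHeartbeats 1000000 in
/-- Lemma A.3: θ-difference inequality for a globally Lipschitz function that is
nonincreasing on `(-∞, -a]` and nondecreasing on `[a, ∞)`, and dominated by a
nondecreasing function `φ`. -/
theorem stmt_2
    (a k : ℝ) (ha : 0 ≤ a) (hk : 0 < k)
    (φ : ℝ → ℝ)
    (hφ_nonneg : ∀ x : ℝ, 0 ≤ x → 0 ≤ φ x)
    (hφ_mono : ∀ x y : ℝ, 0 ≤ x → x ≤ y → φ x ≤ φ y)
    (hφ_cont : ContinuousOn φ (Set.Ici (0 : ℝ)))
    (f : ℝ → ℝ) (hf_cont : Continuous f)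
    (hf_bdd : ∀ x : ℝ, |f x| ≤ φ |x|)
    (hf_lip : ∀ x₁ x₂ : ℝ, |f x₁ - f x₂| ≤ k * |x₁ - x₂|)
    (hf_anti : AntitoneOn f (Set.Iic (-a)))
    (hf_mono' : MonotoneOn f (Set.Ici a)) :
    ∀ (x₁ x₂ θ : ℝ), 0 < θ → θ < 1 →
      (f x₁ - θ * f x₂) / (1 - θ) ≤
        4 * k * |(x₁ - θ * x₂) / (1 - θ)| + 4 * k * a + 11 * φ a + φ |x₂| := by
  intro x₁ x₂ θ hθ0 hθ1
  have hθ' : 0 < 1 - θ := by linarith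
  set y : ℝ := (x₁ - θ * x₂) / (1 - θ) with hy
  have hx₁eq : x₁ = θ * x₂ + (1 - θ) * y := by
    rw [hy]; field_simp; ring
  have hφa : 0 ≤ φ a := hφ_nonneg a ha
  have hyabs : y ≤ |y| := le_abs_self y
  have hyabs' : -|y| ≤ y := neg_abs_le y
  have hyn : 0 ≤ |y| := abs_nonneg y
  have hb2 : f x₂ ≤ φ |x₂| := (abs_le.mp (hf_bdd x₂)).2
  have hrhs_nonneg : 0 ≤ 4 * k * |y| + 4 * k * a + 11 * φ a := by positivity
  -- main claim
  have key : f x₁ - f x₂ ≤ (1 - θ) * (4 * k * |y| + 4 * k * a + 11 * φ a) := by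
    by_cases hcase : |x₂| ≤ 3 * |y| + 4 * a
    · have h1 : f x₁ - f x₂ ≤ k * |x₁ - x₂| :=
        le_trans (le_abs_self _) (hf_lip x₁ x₂)
      have h2 : |x₁ - x₂| = (1 - θ) * |y - x₂| := by
        have : x₁ - x₂ = (1 - θ) * (y - x₂) := by rw [hx₁eq]; ring
        rw [this, abs_mul, abs_of_pos hθ']
      have h3 : |y - x₂| ≤ |y| + |x₂| := abs_sub y x₂
      have h5 : |y - x₂| ≤ 4 * |y| + 4 * a := by linarith
      have h6 : k * ((1 - θ) * |y - x₂|) ≤ k * ((1 - θ) * (4 * |y| + 4 * a)) := by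
        apply mul_le_mul_of_nonneg_left _ hk.le
        exact mul_le_mul_of_nonneg_left h5 hθ'.le
      have h7 : 0 ≤ (1 - θ) * (11 * φ a) := by positivity
      rw [h2] at h1
      nlinarith [h1, h6, h7]
    · push_neg at hcase
      rcases le_or_gt 0 x₂ with hx₂0 | hx₂0
      · rw [abs_of_nonneg hx₂0] at hcase
        have hax₂ : a ≤ x₂ := by linarith
        by_cases hx1a : a ≤ x₁
        · have hyx : y ≤ x₂ := by linarith
          have hx12 : x₁ ≤ x₂ := by
            nlinarith [mul_nonneg hθ'.le (sub_nonneg.mpr hyx)]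
          have hmono : f x₁ ≤ f x₂ := hf_mono' hx1a hax₂ hx12
          nlinarith [mul_nonneg hθ'.le hrhs_nonneg]
        · push_neg at hx1a
          have hθ13 : θ ≤ 1 / 3 := by
            nlinarith [mul_pos hθ0 (show (0:ℝ) < x₂ - (3 * |y| + 4 * a) by linarith),
              mul_nonneg hθ0.le hyn, mul_nonneg hθ0.le ha,
              mul_le_mul_of_nonneg_left hyabs hθ0.le]
          have hlow : -|y| ≤ x₁ := by
            nlinarith [mul_nonneg hθ0.le hx₂0,
              mul_le_mul_of_nonneg_left hyabs hθ0.le]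
          have hfx1 : f x₁ - f a ≤ k * (a - x₁) := by
            have := le_trans (le_abs_self _) (hf_lip x₁ a)
            rwa [abs_of_nonpos (by linarith : x₁ - a ≤ 0), neg_sub] at this
          have hfa : |f a| ≤ φ a := by
            have := hf_bdd a; rwa [abs_of_nonneg ha] at this
          have hfx2 : f a ≤ f x₂ := hf_mono' (le_refl a) hax₂ hax₂
          have hfa' := abs_le.mp hfa
          have hk1 : k * (a - x₁) ≤ k * (a + |y|) :=
            mul_le_mul_of_nonneg_left (by linarith) hk.le
          have h4 : f x₁ - f x₂ ≤ 2 * φ a + k * (a + |y|) := by linarith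
          have h13 : (0:ℝ) ≤ 1/3 - θ := by linarith
          nlinarith [mul_nonneg h13 (mul_nonneg hk.le hyn),
            mul_nonneg h13 (mul_nonneg hk.le ha), mul_nonneg h13 hφa,
            mul_nonneg hk.le hyn, mul_nonneg hk.le ha]
      · rw [abs_of_neg hx₂0] at hcase
        have hax₂ : x₂ ≤ -a := by linarith
        by_cases hx1a : x₁ ≤ -a
        · have hyx : x₂ ≤ y := by linarith
          have hx12 : x₂ ≤ x₁ := by
            nlinarith [mul_nonneg hθ'.le (sub_nonneg.mpr hyx)]
          have hmono : f x₁ ≤ f x₂ := hf_anti hax₂ hx1a hx12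
          nlinarith [mul_nonneg hθ'.le hrhs_nonneg]
        · push_neg at hx1a
          have hθ13 : θ ≤ 1 / 3 := by
            nlinarith [mul_pos hθ0 (show (0:ℝ) < -x₂ - (3 * |y| + 4 * a) by linarith),
              mul_nonneg hθ0.le hyn, mul_nonneg hθ0.le ha,
              mul_le_mul_of_nonneg_left hyabs' hθ0.le]
          have hhigh : x₁ ≤ |y| := by
            nlinarith [mul_pos hθ0 (neg_pos.mpr hx₂0),
              mul_le_mul_of_nonneg_left hyabs hθ0.le]
          have hfx1 : f x₁ - f (-a) ≤ k * (x₁ + a) := by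
            have := le_trans (le_abs_self _) (hf_lip x₁ (-a))
            rwa [abs_of_nonneg (by linarith : (0:ℝ) ≤ x₁ - -a), sub_neg_eq_add] at this
          have hfa : |f (-a)| ≤ φ a := by
            have := hf_bdd (-a); rwa [abs_neg, abs_of_nonneg ha] at this
          have hfx2 : f (-a) ≤ f x₂ := hf_anti hax₂ (le_refl (-a)) hax₂
          have hfa' := abs_le.mp hfa
          have hk1 : k * (x₁ + a) ≤ k * (a + |y|) :=
            mul_le_mul_of_nonneg_left (by linarith) hk.le
          have h4 : f x₁ - f x₂ ≤ 2 * φ a + k * (a + |y|) := by linarith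
          have h13 : (0:ℝ) ≤ 1/3 - θ := by linarith
          nlinarith [mul_nonneg h13 (mul_nonneg hk.le hyn),
            mul_nonneg h13 (mul_nonneg hk.le ha), mul_nonneg h13 hφa,
            mul_nonneg hk.le hyn, mul_nonneg hk.le ha]
  rw [div_le_iff₀ hθ']
  have hb2' : (1 - θ) * f x₂ ≤ (1 - θ) * φ |x₂| :=
    mul_le_mul_of_nonneg_left hb2 hθ'.le
  linarith [key, hb2']
end

section
/- Let a ≥ 0, L > 0, M ≥ 0, and let h : ℝ → ℝ satisfy: |h(x₁) − h(x₂)| ≤ L|x₁ − x₂| for all x₁, x₂ ∈ ℝ; |h(x)| ≤ M for all x ∈ ℝ; and h(x) = 0 whenever |x| ≥ a. Then for all x₁, x₂ ∈ ℝ and θ ∈ (0,1): (h(x₁) − θ h(x₂))/(1−θ) ≤ L·|(x₁ − θx₂)/(1−θ)| + 5M + 2La. -/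
/-- Inequality (A.11): the θ-difference estimate for a bounded, compactly
supported Lipschitz perturbation `h`. -/
theorem stmt_3
    (a L M : ℝ) (ha : 0 ≤ a) (hL : 0 < L) (hM : 0 ≤ M)
    (h : ℝ → ℝ)
    (hlip : ∀ x₁ x₂ : ℝ, |h x₁ - h x₂| ≤ L * |x₁ - x₂|)
    (hbdd : ∀ x : ℝ, |h x| ≤ M)
    (hsupp : ∀ x : ℝ, a ≤ |x| → h x = 0) :
    ∀ (x₁ x₂ θ : ℝ), 0 < θ → θ < 1 →
      (h x₁ - θ * h x₂) / (1 - θ) ≤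
        L * |(x₁ - θ * x₂) / (1 - θ)| + 5 * M + 2 * L * a := by
  intro x₁ x₂ θ hθ0 hθ1
  have h1θ : 0 < 1 - θ := by linarith
  -- key estimate
  have key : |h (θ * x₂) - h x₂| ≤ (1 - θ) * (4 * M + 2 * L * a) := by
    rcases le_or_gt θ (1/2 : ℝ) with hhalf | hhalf
    · have := hbdd (θ * x₂)
      have := hbdd x₂
      have h2 : |h (θ * x₂) - h x₂| ≤ 2 * M := by
        calc |h (θ * x₂) - h x₂| ≤ |h (θ * x₂)| + |h x₂| := abs_sub _ _
          _ ≤ 2 * M := by linarith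
      have : (2 : ℝ) * M ≤ (1 - θ) * (4 * M + 2 * L * a) := by
        nlinarith [mul_nonneg hM (by linarith : (0:ℝ) ≤ 2 - 4*θ),
          mul_nonneg (mul_nonneg hL.le ha) h1θ.le]
      linarith
    · rcases le_or_gt |x₂| (2 * a) with hx | hx
      · have := hlip (θ * x₂) x₂
        have habs : |θ * x₂ - x₂| = (1 - θ) * |x₂| := by
          rw [show θ * x₂ - x₂ = -((1 - θ) * x₂) by ring, abs_neg, abs_mul,
            abs_of_pos h1θ]
        rw [habs] at this
        nlinarith [mul_le_mul_of_nonneg_left hx (mul_nonneg h1θ.le hL.le),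
          mul_nonneg hM h1θ.le]
      · have h1 : h x₂ = 0 := hsupp x₂ (by linarith)
        have h2 : h (θ * x₂) = 0 := by
          apply hsupp
          rw [abs_mul, abs_of_pos hθ0]
          nlinarith [abs_nonneg x₂]
        rw [h1, h2]
        simp
        positivity
  -- decompose
  have hdecomp : (h x₁ - θ * h x₂) / (1 - θ) =
      (h x₁ - h (θ * x₂)) / (1 - θ) + (h (θ * x₂) - h x₂) / (1 - θ) + h x₂ := by
    field_simp
    ring
  rw [hdecomp]
  have t1 : (h x₁ - h (θ * x₂)) / (1 - θ) ≤ L * |(x₁ - θ * x₂) / (1 - θ)| := by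
    rw [abs_div, abs_of_pos h1θ, ← mul_div_assoc]
    gcongr
    calc h x₁ - h (θ * x₂) ≤ |h x₁ - h (θ * x₂)| := le_abs_self _
      _ ≤ L * |x₁ - θ * x₂| := hlip _ _
  have t2 : (h (θ * x₂) - h x₂) / (1 - θ) ≤ 4 * M + 2 * L * a := by
    rw [div_le_iff₀ h1θ]
    calc h (θ * x₂) - h x₂ ≤ |h (θ * x₂) - h x₂| := le_abs_self _
      _ ≤ (1 - θ) * (4 * M + 2 * L * a) := key
      _ = (4 * M + 2 * L * a) * (1 - θ) := by ring
  have t3 : h x₂ ≤ M := (abs_le.mp (hbdd x₂)).2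
  linarith
end

section
/- Let α ∈ (1,2), α* := α/(α−1), and set k_α := exp(α*/2). Then the function x ↦ [ln(k_α + x)]^{α*/2} is concave on [0, ∞). -/
/-- Concavity of `x ↦ [ln(k_α + x)]^{α*/2}` on `[0, ∞)`, where
`k_α = exp(α*/2)`; used in Step 1 of the proof of Theorem 4.2. -/
theorem stmt_7
    (α αs : ℝ) (hα : α ∈ Set.Ioo (1 : ℝ) 2) (hαs : αs = α / (α - 1)) :
    ConcaveOn ℝ (Set.Ici (0 : ℝ))
      (fun x : ℝ => (Real.log (Real.exp (αs / 2) + x)) ^ (αs / 2)) := by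
  obtain ⟨h1, h2⟩ := hα
  have hα1 : 0 < α - 1 := by linarith
  have hαs2 : 2 < αs := by
    rw [hαs, lt_div_iff₀ hα1]; nlinarith
  set p : ℝ := αs / 2 with hp_def
  have hp1 : 1 < p := by simp only [hp_def]; linarith
  set k : ℝ := Real.exp p with hk_def
  have hk0 : 0 < k := Real.exp_pos p
  -- positivity facts on Ici 0
  have hkx : ∀ x : ℝ, 0 ≤ x → 0 < k + x := fun x hx => by linarith
  have hlog : ∀ x : ℝ, 0 ≤ x → p ≤ Real.log (k + x) := by
    intro x hx
    calc p = Real.log k := (Real.log_exp p).symm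
      _ ≤ Real.log (k + x) := Real.log_le_log hk0 (by linarith)
  have hlogpos : ∀ x : ℝ, 0 ≤ x → 0 < Real.log (k + x) := fun x hx =>
    lt_of_lt_of_le (by linarith) (hlog x hx)
  -- derivatives
  have hg : ∀ x : ℝ, 0 ≤ x → HasDerivAt (fun y => Real.log (k + y)) ((k + x)⁻¹) x := by
    intro x hx
    have h := (Real.hasDerivAt_log (ne_of_gt (hkx x hx))).comp x
      ((hasDerivAt_id x).const_add k)
    simp at h; exact h
  have hf : ∀ x : ℝ, 0 ≤ x →
      HasDerivAt (fun y => (Real.log (k + y)) ^ p)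
        (p * (Real.log (k + x)) ^ (p - 1) * (k + x)⁻¹) x := by
    intro x hx
    have h := (Real.hasDerivAt_rpow_const
      (x := Real.log (k + x)) (p := p) (Or.inl (ne_of_gt (hlogpos x hx)))).comp x (hg x hx)
    exact h.congr_deriv (by ring)
  have hf2 : ∀ x : ℝ, 0 ≤ x →
      HasDerivAt (fun y => p * (Real.log (k + y)) ^ (p - 1) * (k + y)⁻¹)
        (p * ((p - 1) * (Real.log (k + x)) ^ (p - 1 - 1) * (k + x)⁻¹ * (k + x)⁻¹
          + (Real.log (k + x)) ^ (p - 1) * (-((k + x) ^ 2)⁻¹))) x := by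
    intro x hx
    have hA : HasDerivAt (fun y => (Real.log (k + y)) ^ (p - 1))
        ((p - 1) * (Real.log (k + x)) ^ (p - 1 - 1) * (k + x)⁻¹) x := by
      have h := (Real.hasDerivAt_rpow_const
        (x := Real.log (k + x)) (p := p - 1) (Or.inl (ne_of_gt (hlogpos x hx)))).comp x (hg x hx)
      exact h.congr_deriv (by ring)
    have hB : HasDerivAt (fun y => (k + y)⁻¹) (-((k + x) ^ 2)⁻¹) x := by
      have h := ((hasDerivAt_inv (ne_of_gt (hkx x hx))).comp x
        ((hasDerivAt_id x).const_add k))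
      simp at h; exact h
    have := (hA.mul hB).const_mul p
    refine this.congr_of_eventuallyEq (Filter.Eventually.of_forall fun y => ?_)
    simp only [Pi.mul_apply]; ring
  apply concaveOn_of_hasDerivWithinAt2_nonpos (f' := fun x =>
      p * (Real.log (k + x)) ^ (p - 1) * (k + x)⁻¹)
    (f'' := fun x => p * ((p - 1) * (Real.log (k + x)) ^ (p - 1 - 1) * (k + x)⁻¹ * (k + x)⁻¹
          + (Real.log (k + x)) ^ (p - 1) * (-((k + x) ^ 2)⁻¹)))
    (convex_Ici 0)
  · intro x hx
    exact ((hf x hx).continuousAt).continuousWithinAt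
  · intro x hx
    rw [interior_Ici] at hx
    exact (hf x (le_of_lt hx)).hasDerivWithinAt
  · intro x hx
    rw [interior_Ici] at hx
    exact (hf2 x (le_of_lt hx)).hasDerivWithinAt
  · intro x hx
    rw [interior_Ici] at hx
    have hx0 : (0:ℝ) ≤ x := le_of_lt hx
    set L := Real.log (k + x) with hL
    have hL0 : 0 < L := hlogpos x hx0
    have hLp : p ≤ L := hlog x hx0
    have hkx0 : 0 < k + x := hkx x hx0
    have key : (p - 1) * L ^ (p - 1 - 1) * (k + x)⁻¹ * (k + x)⁻¹
        + L ^ (p - 1) * (-((k + x) ^ 2)⁻¹) ≤ 0 := by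
      have e1 : L ^ (p - 1) = L ^ (p - 1 - 1) * L := by
        rw [← Real.rpow_add_one (ne_of_gt hL0)]; ring_nf
      have e2 : ((k + x) ^ 2)⁻¹ = (k + x)⁻¹ * (k + x)⁻¹ := by
        rw [sq, mul_inv]
      rw [e1, e2]
      have hLpow : 0 ≤ L ^ (p - 1 - 1) := Real.rpow_nonneg (le_of_lt hL0) _
      have hinv : 0 ≤ (k + x)⁻¹ * (k + x)⁻¹ := by positivity
      have : (p - 1) * L ^ (p - 1 - 1) * (k + x)⁻¹ * (k + x)⁻¹
          + L ^ (p - 1 - 1) * L * (-((k + x)⁻¹ * (k + x)⁻¹))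
          = (L ^ (p - 1 - 1) * ((k + x)⁻¹ * (k + x)⁻¹)) * ((p - 1) - L) := by ring
      rw [this]
      apply mul_nonpos_of_nonneg_of_nonpos
      · positivity
      · linarith
    have hp0 : (0:ℝ) < p := by linarith
    calc p * ((p - 1) * L ^ (p - 1 - 1) * (k + x)⁻¹ * (k + x)⁻¹
          + L ^ (p - 1) * (-((k + x) ^ 2)⁻¹)) ≤ p * 0 :=
        mul_le_mul_of_nonneg_left key (le_of_lt hp0)
      _ = 0 := mul_zero p
end

section
/- Let α ∈ (1,2), α* := α/(α−1), and set k_α := exp(α*/2). Let (X, 𝒜, μ) be a probability space and let h : X → [0,∞) be a measurable function that is integrable with respect to μ. Then ( ∫_X [ln(k_α + h)]^{α*/2} dμ )^{2/α*} ≤ ln( k_α + ∫_X h dμ ). -/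
open MeasureTheory

section Aux

variable {X : Type*} [MeasurableSpace X]

lemma stmt8_aux (μ : Measure X) [IsProbabilityMeasure μ]
    (p : ℝ) (hp : 1 < p)
    (h : X → ℝ) (hmeas : Measurable h) (hnonneg : ∀ x, 0 ≤ h x)
    (hint : Integrable h μ) :
    (∫ x, (Real.log (Real.exp p + h x)) ^ p ∂μ) ^ p⁻¹ ≤
      Real.log (Real.exp p + ∫ x, h x ∂μ) := by
  set k : ℝ := Real.exp p with hk
  have hp0 : 0 < p := by linarith
  have hkpos : 0 < k := Real.exp_pos p
  set φ : ℝ → ℝ := fun t => Real.log (k + t) ^ p with hφ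
  -- basic positivity
  have hktpos : ∀ t : ℝ, 0 ≤ t → 0 < k + t := fun t ht => by linarith
  have hlog_ge : ∀ t : ℝ, 0 ≤ t → p ≤ Real.log (k + t) := by
    intro t ht
    have : Real.log k ≤ Real.log (k + t) := Real.log_le_log hkpos (by linarith)
    rwa [hk, Real.log_exp] at this
  have hlog_pos : ∀ t : ℝ, 0 ≤ t → 0 < Real.log (k + t) := fun t ht =>
    lt_of_lt_of_le hp0 (hlog_ge t ht)
  -- derivative
  set g : ℝ → ℝ := fun t => p * Real.log (k + t) ^ (p - 1) * (k + t)⁻¹ with hg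
  have hderiv : ∀ t : ℝ, 0 ≤ t → HasDerivAt φ (g t) t := by
    intro t ht
    have h1 : HasDerivAt (fun s : ℝ => k + s) 1 t := by
      simpa using (hasDerivAt_id t).const_add k
    have h2 : HasDerivAt (fun s : ℝ => Real.log (k + s)) ((k + t)⁻¹ * 1) t :=
      (Real.hasDerivAt_log (hktpos t ht).ne').comp t h1
    have h3 : HasDerivAt (fun y : ℝ => y ^ p)
        (p * Real.log (k + t) ^ (p - 1)) (Real.log (k + t)) :=
      Real.hasDerivAt_rpow_const (Or.inl (hlog_pos t ht).ne')
    have := h3.comp t h2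
    simpa [hg, hφ, Function.comp_def, mul_comm, mul_assoc, mul_left_comm] using this
  -- concavity on Ici 0
  have hcont : ContinuousOn φ (Set.Ici (0 : ℝ)) := fun t ht =>
    (hderiv t ht).continuousAt.continuousWithinAt
  have hdiff : DifferentiableOn ℝ φ (interior (Set.Ici (0 : ℝ))) := by
    rw [interior_Ici]
    exact fun t ht => ((hderiv t (le_of_lt ht)).differentiableAt).differentiableWithinAt
  have hanti : AntitoneOn (deriv φ) (interior (Set.Ici (0 : ℝ))) := by
    rw [interior_Ici]
    intro a ha b hb hab
    rw [Set.mem_Ioi] at ha hb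
    rw [(hderiv a ha.le).deriv, (hderiv b hb.le).deriv]
    set u : ℝ := Real.log (k + a) with hu
    set v : ℝ := Real.log (k + b) with hv
    have hupos : 0 < u := hlog_pos a ha.le
    have hup : p ≤ u := hlog_ge a ha.le
    have huv : u ≤ v := Real.log_le_log (hktpos a ha.le) (by linarith)
    have hvpos : 0 < v := lt_of_lt_of_le hupos huv
    -- key: v ^ (p-1) ≤ u ^ (p-1) * exp (v - u)
    have hkey : v ^ (p - 1) ≤ u ^ (p - 1) * Real.exp (v - u) := by
      have h1 : v ^ (p - 1) = u ^ (p - 1) * (v / u) ^ (p - 1) := by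
        rw [← Real.mul_rpow hupos.le (by positivity)]
        rw [mul_div_cancel₀ _ hupos.ne']
      rw [h1]
      have h2 : (v / u) ^ (p - 1) ≤ Real.exp (v - u) := by
        rw [Real.rpow_def_of_pos (by positivity)]
        apply Real.exp_le_exp.2
        have hl : Real.log (v / u) ≤ v / u - 1 :=
          Real.log_le_sub_one_of_pos (by positivity)
        have h3 : Real.log (v / u) * (p - 1) ≤ (v / u - 1) * (p - 1) :=
          mul_le_mul_of_nonneg_right hl (by linarith)
        refine h3.trans ?_
        rw [div_sub_one hupos.ne', div_mul_eq_mul_div, div_le_iff₀ hupos]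
        nlinarith
      exact mul_le_mul_of_nonneg_left h2 (Real.rpow_nonneg hupos.le _)
    have hekb : (k + b)⁻¹ = Real.exp (-v) := by
      rw [Real.exp_neg, hv, Real.exp_log (hktpos b hb.le)]
    have heka : (k + a)⁻¹ = Real.exp (-u) := by
      rw [Real.exp_neg, hu, Real.exp_log (hktpos a ha.le)]
    show p * Real.log (k + b) ^ (p - 1) * (k + b)⁻¹ ≤
      p * Real.log (k + a) ^ (p - 1) * (k + a)⁻¹
    rw [hekb, heka, ← hu, ← hv]
    calc p * v ^ (p - 1) * Real.exp (-v)
        ≤ p * (u ^ (p - 1) * Real.exp (v - u)) * Real.exp (-v) := by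
          apply mul_le_mul_of_nonneg_right _ (Real.exp_pos _).le
          exact mul_le_mul_of_nonneg_left hkey hp0.le
      _ = p * u ^ (p - 1) * Real.exp (-u) := by
          rw [show p * (u ^ (p - 1) * Real.exp (v - u)) * Real.exp (-v)
              = p * u ^ (p - 1) * (Real.exp (v - u) * Real.exp (-v)) by ring,
            ← Real.exp_add, show v - u + -v = -u by ring]
  have hconc : ConcaveOn ℝ (Set.Ici (0 : ℝ)) φ :=
    AntitoneOn.concaveOn_of_deriv (convex_Ici 0) hcont hdiff hanti
  -- monotonicity of φ on Ici 0
  have hmono : ∀ a b : ℝ, 0 ≤ a → a ≤ b → φ a ≤ φ b := by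
    intro a b ha hab
    exact Real.rpow_le_rpow (hlog_pos a ha).le
      (Real.log_le_log (hktpos a ha) (by linarith)) hp0.le
  have hφnonneg : ∀ t : ℝ, 0 ≤ t → 0 ≤ φ t := fun t ht =>
    Real.rpow_nonneg (hlog_pos t ht).le _
  -- linear bound: φ t ≤ φ 1 + φ 1 * t for t ≥ 0
  have hφ1 : 0 ≤ φ 1 := hφnonneg 1 one_pos.le
  have hbound : ∀ t : ℝ, 0 ≤ t → φ t ≤ φ 1 + φ 1 * t := by
    intro t ht
    rcases le_or_gt t 1 with h1 | h1
    · have := hmono t 1 ht h1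
      nlinarith
    · have ht1 : 0 < t := by linarith
      have hA : (0:ℝ) ≤ 1 - 1/t := by
        rw [sub_nonneg]; exact div_le_one_of_le₀ h1.le ht1.le
      have hB : (0:ℝ) ≤ 1/t := by positivity
      have hAB : (1 - 1/t) + 1/t = 1 := by ring
      have h2 := hconc.2 (Set.mem_Ici.2 (le_refl (0 : ℝ))) (Set.mem_Ici.2 ht) hA hB hAB
      simp only [smul_eq_mul, mul_zero, zero_add] at h2
      rw [one_div, inv_mul_cancel₀ ht1.ne'] at h2
      have hφ0 : 0 ≤ φ 0 := hφnonneg 0 le_rfl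
      have hA' : (0:ℝ) ≤ 1 - t⁻¹ := by rw [← one_div]; exact hA
      have h3 : (1 / t) * φ t ≤ φ 1 := by
        rw [one_div]
        nlinarith [mul_nonneg hA' hφ0]
      have : φ t ≤ t * φ 1 := by
        rw [one_div] at h3
        calc φ t = t * (t⁻¹ * φ t) := by field_simp
          _ ≤ t * φ 1 := mul_le_mul_of_nonneg_left h3 ht1.le
      nlinarith
  -- integrability of φ ∘ h
  have hmeasφ : Measurable (fun x => φ (h x)) := by
    simp only [hφ]
    exact (Real.continuous_rpow_const hp0.le).measurable.comp
      (Real.measurable_log.comp (measurable_const.add hmeas))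
  have hgi : Integrable (φ ∘ h) μ := by
    apply Integrable.mono' ((integrable_const (φ 1)).add (hint.const_mul (φ 1)))
      hmeasφ.aestronglyMeasurable
    filter_upwards with x
    rw [Real.norm_of_nonneg (hφnonneg _ (hnonneg x))]
    exact hbound (h x) (hnonneg x)
  -- Jensen
  have hJ : (∫ x, φ (h x) ∂μ) ≤ φ (∫ x, h x ∂μ) :=
    hconc.le_map_integral hcont isClosed_Ici
      (Filter.Eventually.of_forall fun x => Set.mem_Ici.2 (hnonneg x)) hint hgi
  have hm : (0 : ℝ) ≤ ∫ x, h x ∂μ := integral_nonneg hnonneg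
  have hInonneg : (0 : ℝ) ≤ ∫ x, φ (h x) ∂μ :=
    integral_nonneg fun x => hφnonneg _ (hnonneg x)
  calc (∫ x, Real.log (k + h x) ^ p ∂μ) ^ p⁻¹
      ≤ (φ (∫ x, h x ∂μ)) ^ p⁻¹ := Real.rpow_le_rpow hInonneg hJ (by positivity)
    _ = Real.log (k + ∫ x, h x ∂μ) := by
        rw [hφ]
        exact Real.rpow_rpow_inv (hlog_pos _ hm).le hp0.ne'

end Aux

/-- The Jensen-inequality estimate from display (4.8) in the proof of
Theorem 4.2: for a probability measure `μ` and integrable `h ≥ 0`,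
`(∫ [ln(k_α + h)]^{α*/2} dμ)^{2/α*} ≤ ln(k_α + ∫ h dμ)` with
`k_α = exp(α*/2)`. -/
theorem stmt_8
    {X : Type*} [MeasurableSpace X] (μ : Measure X) [IsProbabilityMeasure μ]
    (α αs : ℝ) (hα : α ∈ Set.Ioo (1 : ℝ) 2) (hαs : αs = α / (α - 1))
    (h : X → ℝ) (hmeas : Measurable h) (hnonneg : ∀ x, 0 ≤ h x)
    (hint : Integrable h μ) :
    (∫ x, (Real.log (Real.exp (αs / 2) + h x)) ^ (αs / 2) ∂μ) ^ (2 / αs) ≤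
      Real.log (Real.exp (αs / 2) + ∫ x, h x ∂μ) := by
  obtain ⟨hα1, hα2⟩ := hα
  have hαs2 : 2 < αs := by
    rw [hαs, lt_div_iff₀ (by linarith)]
    linarith
  have h2αs : (2 : ℝ) / αs = (αs / 2)⁻¹ := by rw [inv_div]
  rw [h2αs]
  exact stmt8_aux μ (αs / 2) (by linarith) h hmeas hnonneg hint
end

section
/- Let α ∈ (1,2) and f, β, γ ≥ 0, and let g : ℝ × ℝ^d → ℝ satisfy the one-sided growth condition sgn(y)·g(y,z) ≤ f + β|y| + γ|z|^α for all (y,z) ∈ ℝ × ℝ^d. (a) If g is convex on ℝ × ℝ^d, then g satisfies the (5.1)-condition with constants f, β, γ; indeed, for all (y₁,z₁),(y₂,z₂) ∈ ℝ×ℝ^d and θ ∈ (0,1) with y₁ − θy₂ > 0, g(y₁,z₁) − θg(y₂,z₂) ≤ (1−θ)(f + β|δ_θy| + γ|δ_θz|^α). (b) If g is concave on ℝ × ℝ^d, then g satisfies the (5.2)-condition with constants f, β, γ; indeed, for all (y₁,z₁),(y₂,z₂) and θ ∈ (0,1) with y₁ − θy₂ < 0, −(g(y₁,z₁) − θg(y₂,z₂))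 ≤ (1−θ)(f + β|δ_θy| + γ|δ_θz|^α). -/
/-- Part (i) of Proposition 5.1, stated pointwise: a convex (resp. concave)
generator with one-sided growth satisfies the (5.1)- (resp. (5.2)-) type
θ-difference inequality. Here `sgn y = 1` if `y > 0` and `-1` otherwise. -/
theorem stmt_13 {d : ℕ}
    (α f β γ : ℝ) (hα : α ∈ Set.Ioo (1 : ℝ) 2)
    (hf : 0 ≤ f) (hβ : 0 ≤ β) (hγ : 0 ≤ γ)
    (g : ℝ → EuclideanSpace ℝ (Fin d) → ℝ)
    (hgrowth : ∀ (y : ℝ) (z : EuclideanSpace ℝ (Fin d)),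
      (if 0 < y then (1 : ℝ) else -1) * g y z ≤ f + β * |y| + γ * ‖z‖ ^ α) :
    ((ConvexOn ℝ Set.univ
        (fun p : ℝ × EuclideanSpace ℝ (Fin d) => g p.1 p.2)) →
      ∀ (y₁ y₂ : ℝ) (z₁ z₂ : EuclideanSpace ℝ (Fin d)) (θ : ℝ),
        0 < θ → θ < 1 → 0 < y₁ - θ * y₂ →
          g y₁ z₁ - θ * g y₂ z₂ ≤
            (1 - θ) * (f + β * |(y₁ - θ * y₂) / (1 - θ)|
              + γ * ‖(1 - θ)⁻¹ • (z₁ - θ • z₂)‖ ^ α)) ∧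
    ((ConcaveOn ℝ Set.univ
        (fun p : ℝ × EuclideanSpace ℝ (Fin d) => g p.1 p.2)) →
      ∀ (y₁ y₂ : ℝ) (z₁ z₂ : EuclideanSpace ℝ (Fin d)) (θ : ℝ),
        0 < θ → θ < 1 → y₁ - θ * y₂ < 0 →
          -(g y₁ z₁ - θ * g y₂ z₂) ≤
            (1 - θ) * (f + β * |(y₁ - θ * y₂) / (1 - θ)|
              + γ * ‖(1 - θ)⁻¹ • (z₁ - θ • z₂)‖ ^ α)) := by
  constructor
  · intro hconv y₁ y₂ z₁ z₂ θ hθ hθ1 hy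
    have h1θ : (0:ℝ) < 1 - θ := by linarith
    set δy : ℝ := (y₁ - θ * y₂) / (1 - θ) with hδy
    set δz : EuclideanSpace ℝ (Fin d) := (1 - θ)⁻¹ • (z₁ - θ • z₂) with hδz
    have hcomb : θ • ((y₂, z₂) : ℝ × EuclideanSpace ℝ (Fin d))
        + (1 - θ) • (δy, δz) = (y₁, z₁) := by
      apply Prod.ext
      · show θ * y₂ + (1 - θ) * δy = y₁
        rw [hδy]; field_simp; ring
      · simp [hδz, smul_smul, mul_inv_cancel₀ h1θ.ne']
    have hc := hconv.2 (Set.mem_univ ((y₂, z₂) : ℝ × EuclideanSpace ℝ (Fin d)))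
      (Set.mem_univ ((δy, δz) : ℝ × EuclideanSpace ℝ (Fin d)))
      hθ.le h1θ.le (by ring)
    rw [hcomb] at hc
    simp only [smul_eq_mul] at hc
    have hδypos : 0 < δy := div_pos hy h1θ
    have hg := hgrowth δy δz
    rw [if_pos hδypos, one_mul] at hg
    have : g y₁ z₁ - θ * g y₂ z₂ ≤ (1 - θ) * g δy δz := by linarith
    calc g y₁ z₁ - θ * g y₂ z₂ ≤ (1 - θ) * g δy δz := this
      _ ≤ (1 - θ) * (f + β * |δy| + γ * ‖δz‖ ^ α) := by
          exact mul_le_mul_of_nonneg_left hg h1θ.le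
  · intro hconc y₁ y₂ z₁ z₂ θ hθ hθ1 hy
    have h1θ : (0:ℝ) < 1 - θ := by linarith
    set δy : ℝ := (y₁ - θ * y₂) / (1 - θ) with hδy
    set δz : EuclideanSpace ℝ (Fin d) := (1 - θ)⁻¹ • (z₁ - θ • z₂) with hδz
    have hcomb : θ • ((y₂, z₂) : ℝ × EuclideanSpace ℝ (Fin d))
        + (1 - θ) • (δy, δz) = (y₁, z₁) := by
      apply Prod.ext
      · show θ * y₂ + (1 - θ) * δy = y₁
        rw [hδy]; field_simp; ring
      · simp [hδz, smul_smul, mul_inv_cancel₀ h1θ.ne']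
    have hc := hconc.2 (Set.mem_univ ((y₂, z₂) : ℝ × EuclideanSpace ℝ (Fin d)))
      (Set.mem_univ ((δy, δz) : ℝ × EuclideanSpace ℝ (Fin d)))
      hθ.le h1θ.le (by ring)
    rw [hcomb] at hc
    simp only [smul_eq_mul] at hc
    have hδyneg : ¬ (0 < δy) := by
      have : δy < 0 := div_neg_of_neg_of_pos hy h1θ
      linarith
    have hg := hgrowth δy δz
    rw [if_neg hδyneg, neg_one_mul] at hg
    have : -(g y₁ z₁ - θ * g y₂ z₂) ≤ (1 - θ) * (-g δy δz) := by nlinarith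
    calc -(g y₁ z₁ - θ * g y₂ z₂) ≤ (1 - θ) * (-g δy δz) := this
      _ ≤ (1 - θ) * (f + β * |δy| + γ * ‖δz‖ ^ α) := by
          exact mul_le_mul_of_nonneg_left hg h1θ.le
end

section
/- Let α ∈ (1,2). Let l : ℝ → ℝ be bounded and Lipschitz continuous, and let q : ℝ^d → ℝ be bounded and Lipschitz continuous with bounded support (i.e., there exists R > 0 with q(z) = 0 whenever |z| > R). Define g(y,z) := l(y)·q(z). Then there exist nonnegative constants F, B, Γ (depending only on α, the bounds and Lipschitz constants of l and q, and R) such that g satisfies both the (5.1)-condition and the (5.2)-condition with constants F, B, Γ. -/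
set_option maxHeartbeats 1000000


/-- The (5.1)-condition with constants `f, β, γ` for a generator
`g : ℝ × ℝ^d → ℝ` (stated pointwise). -/
def Cond51 {d : ℕ} (α f β γ : ℝ) (g : ℝ → EuclideanSpace ℝ (Fin d) → ℝ) : Prop :=
  ∀ (y₁ y₂ : ℝ) (z₁ z₂ : EuclideanSpace ℝ (Fin d)) (θ : ℝ),
    0 < θ → θ < 1 → 0 < y₁ - θ * y₂ →
      g y₁ z₁ - θ * g y₂ z₂ ≤
        (1 - θ) * (f + β * |y₂| + β * |(y₁ - θ * y₂) / (1 - θ)|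
          + γ * ‖(1 - θ)⁻¹ • (z₁ - θ • z₂)‖ ^ α)

/-- The (5.2)-condition with constants `f, β, γ`. -/
def Cond52 {d : ℕ} (α f β γ : ℝ) (g : ℝ → EuclideanSpace ℝ (Fin d) → ℝ) : Prop :=
  ∀ (y₁ y₂ : ℝ) (z₁ z₂ : EuclideanSpace ℝ (Fin d)) (θ : ℝ),
    0 < θ → θ < 1 → y₁ - θ * y₂ < 0 →
      -(g y₁ z₁ - θ * g y₂ z₂) ≤
        (1 - θ) * (f + β * |y₂| + β * |(y₁ - θ * y₂) / (1 - θ)|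
          + γ * ‖(1 - θ)⁻¹ • (z₁ - θ • z₂)‖ ^ α)

/-- Part (ii) of Proposition 5.1, stated pointwise: a generator of the form
`g(y,z) = l(y) q(z)` with `l` bounded Lipschitz and `q` bounded Lipschitz with
bounded support satisfies both the (5.1)- and (5.2)-conditions for suitable
nonnegative constants. -/
theorem stmt_14 {d : ℕ}
    (α : ℝ) (hα : α ∈ Set.Ioo (1 : ℝ) 2)
    (l : ℝ → ℝ) (q : EuclideanSpace ℝ (Fin d) → ℝ)
    (Ml Kl Mq Kq R : ℝ) (hR : 0 < R)
    (hl_bdd : ∀ y : ℝ, |l y| ≤ Ml)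
    (hl_lip : ∀ y₁ y₂ : ℝ, |l y₁ - l y₂| ≤ Kl * |y₁ - y₂|)
    (hq_bdd : ∀ z : EuclideanSpace ℝ (Fin d), |q z| ≤ Mq)
    (hq_lip : ∀ z₁ z₂ : EuclideanSpace ℝ (Fin d), |q z₁ - q z₂| ≤ Kq * ‖z₁ - z₂‖)
    (hq_supp : ∀ z : EuclideanSpace ℝ (Fin d), R < ‖z‖ → q z = 0) :
    ∃ F B Γ : ℝ, 0 ≤ F ∧ 0 ≤ B ∧ 0 ≤ Γ ∧
      Cond51 α F B Γ (fun y z => l y * q z) ∧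
      Cond52 α F B Γ (fun y z => l y * q z) := by

  obtain ⟨hα1, hα2⟩ := hα
  set Ml' := max Ml 0 with hMl'def
  set Kl' := max Kl 0 with hKl'def
  set Mq' := max Mq 0 with hMq'def
  set Kq' := max Kq 0 with hKq'def
  have hMl : (0:ℝ) ≤ Ml' := le_max_right _ _
  have hKl : (0:ℝ) ≤ Kl' := le_max_right _ _
  have hMq : (0:ℝ) ≤ Mq' := le_max_right _ _
  have hKq : (0:ℝ) ≤ Kq' := le_max_right _ _
  have hl_bdd' : ∀ y, |l y| ≤ Ml' := fun y => (hl_bdd y).trans (le_max_left _ _)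
  have hq_bdd' : ∀ z, |q z| ≤ Mq' := fun z => (hq_bdd z).trans (le_max_left _ _)
  have hl_lip' : ∀ y₁ y₂, |l y₁ - l y₂| ≤ Kl' * |y₁ - y₂| := fun y₁ y₂ =>
    (hl_lip y₁ y₂).trans (mul_le_mul_of_nonneg_right (le_max_left _ _) (abs_nonneg _))
  have hq_lip' : ∀ z₁ z₂, |q z₁ - q z₂| ≤ Kq' * ‖z₁ - z₂‖ := fun z₁ z₂ =>
    (hq_lip z₁ z₂).trans (mul_le_mul_of_nonneg_right (le_max_left _ _) (norm_nonneg _))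
  have hRα : (0:ℝ) < R ^ α := Real.rpow_pos_of_pos hR α
  set F := Ml' * Mq' + 4 * Ml' * Mq' + Ml' * Kq' * (4 * R + 1) with hF
  set B := Mq' * Kl' with hB
  set Γ := Ml' * Kq' + 2 * Ml' * Mq' / R ^ α with hΓ
  clear_value Ml' Kl' Mq' Kq' F B Γ
  have key : ∀ (y₁ y₂ : ℝ) (z₁ z₂ : EuclideanSpace ℝ (Fin d)) (θ : ℝ),
      0 < θ → θ < 1 →
      |l y₁ * q z₁ - θ * (l y₂ * q z₂)| ≤
        (1 - θ) * (F + B * |y₂| + B * |(y₁ - θ * y₂) / (1 - θ)|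
          + Γ * ‖(1 - θ)⁻¹ • (z₁ - θ • z₂)‖ ^ α) := by
    intro y₁ y₂ z₁ z₂ θ hθ0 hθ1
    have hu : (0:ℝ) < 1 - θ := by linarith
    set u := 1 - θ with hu_def
    set N := ‖z₁ - θ • z₂‖ with hN_def
    have hN0 : (0:ℝ) ≤ N := norm_nonneg _
    have hnorm : ‖u⁻¹ • (z₁ - θ • z₂)‖ = N / u := by
      rw [norm_smul, norm_inv, Real.norm_eq_abs, abs_of_pos hu, div_eq_inv_mul]
    rw [hnorm]
    set D := N / u with hD_def
    have hD0 : (0:ℝ) ≤ D := div_nonneg hN0 hu.le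
    have hDα0 : (0:ℝ) ≤ D ^ α := Real.rpow_nonneg hD0 α
    set Dy := |(y₁ - θ * y₂) / u| with hDy_def
    have hDy0 : (0:ℝ) ≤ Dy := abs_nonneg _
    clear_value u N D Dy
    have huD : u * D = N := by
      rw [hD_def, mul_div_cancel₀ _ hu.ne']
    -- first term
    have hy : |y₁ - y₂| ≤ u * Dy + u * |y₂| := by
      have h1 : u * Dy = |y₁ - θ * y₂| := by
        rw [hDy_def, abs_div, abs_of_pos hu, mul_div_cancel₀ _ hu.ne']
      have h2 := abs_add_le (y₁ - θ * y₂) (-(u * y₂))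
      have h3 : (y₁ - θ * y₂) + -(u * y₂) = y₁ - y₂ := by rw [hu_def]; ring
      rw [h3, abs_neg, abs_mul, abs_of_pos hu] at h2
      linarith
    have hT1 : |q z₁| * |l y₁ - θ * l y₂| ≤
        u * (Mq' * Ml' + Mq' * Kl' * |y₂| + Mq' * Kl' * Dy) := by
      have h1 : |l y₁ - θ * l y₂| ≤ Kl' * |y₁ - y₂| + u * Ml' := by
        have h2 := abs_add_le (l y₁ - l y₂) (u * l y₂)
        have h3 : (l y₁ - l y₂) + u * l y₂ = l y₁ - θ * l y₂ := by rw [hu_def]; ring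
        rw [h3, abs_mul, abs_of_pos hu] at h2
        have h4 := hl_lip' y₁ y₂
        have h5 := mul_le_mul_of_nonneg_left (hl_bdd' y₂) hu.le
        linarith
      have h6 : |l y₁ - θ * l y₂| ≤ Kl' * (u * Dy + u * |y₂|) + u * Ml' :=
        h1.trans (by nlinarith [mul_le_mul_of_nonneg_left hy hKl])
      have h7 : (0:ℝ) ≤ Kl' * (u * Dy + u * |y₂|) + u * Ml' := by positivity
      calc |q z₁| * |l y₁ - θ * l y₂|
          ≤ Mq' * (Kl' * (u * Dy + u * |y₂|) + u * Ml') :=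
            mul_le_mul (hq_bdd' z₁) h6 (abs_nonneg _) hMq
        _ = u * (Mq' * Ml' + Mq' * Kl' * |y₂| + Mq' * Kl' * Dy) := by ring
    -- second term
    have hq1 : |q z₁| ≤ Mq' := hq_bdd' z₁
    have hq2 : |q z₂| ≤ Mq' := hq_bdd' z₂
    have hl2 : |l y₂| ≤ Ml' := hl_bdd' y₂
    have habs : |q z₁ - q z₂| ≤ 2 * Mq' := by
      have h2 := abs_add_le (q z₁) (-(q z₂))
      rw [abs_neg] at h2
      have : q z₁ + -(q z₂) = q z₁ - q z₂ := by ring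
      rw [this] at h2
      linarith
    have hΓ0 : (0:ℝ) ≤ Γ := by rw [hΓ]; positivity
    have hT2 : θ * |l y₂| * |q z₁ - q z₂| ≤
        u * (4 * Ml' * Mq' + Ml' * Kq' * (4 * R + 1) + Γ * D ^ α) := by
      have hprod : θ * |l y₂| * |q z₁ - q z₂| ≤ θ * (2 * Ml' * Mq') := by
        rw [mul_assoc]
        have h1 : |l y₂| * |q z₁ - q z₂| ≤ Ml' * (2 * Mq') :=
          mul_le_mul hl2 habs (abs_nonneg _) hMl
        have := mul_le_mul_of_nonneg_left h1 hθ0.le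
        linarith
      have hrest : (0:ℝ) ≤ u * (Ml' * Kq' * (4 * R + 1)) := by positivity
      have hΓD : (0:ℝ) ≤ u * (Γ * D ^ α) := by positivity
      rcases le_or_gt θ (1/2) with hhalf | hhalf
      · have hMM : (0:ℝ) ≤ Ml' * Mq' := mul_nonneg hMl hMq
        have e1 : θ * (2 * Ml' * Mq') ≤ (1/2) * (2 * Ml' * Mq') :=
          mul_le_mul_of_nonneg_right hhalf (by linarith)
        have e2 : (1/2) * (4 * Ml' * Mq') ≤ u * (4 * Ml' * Mq') :=
          mul_le_mul_of_nonneg_right (by rw [hu_def]; linarith) (by linarith)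
        have e3 : u * (4 * Ml' * Mq' + Ml' * Kq' * (4 * R + 1) + Γ * D ^ α)
            = u * (4 * Ml' * Mq') + u * (Ml' * Kq' * (4 * R + 1)) + u * (Γ * D ^ α) := by
          ring
        rw [e3]
        linarith
      · rcases le_or_gt ‖z₂‖ (4 * R) with hz2 | hz2
        · -- ‖z₂‖ ≤ 4R : use Lipschitz bound on q
          have h7 : θ * |l y₂| * |q z₁ - q z₂| ≤ Ml' * (Kq' * ‖z₁ - z₂‖) := by
            have h8 := hq_lip' z₁ z₂
            have h9 : |l y₂| * |q z₁ - q z₂| ≤ Ml' * (Kq' * ‖z₁ - z₂‖) :=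
              mul_le_mul hl2 h8 (abs_nonneg _) hMl
            have h9' : θ * (|l y₂| * |q z₁ - q z₂|) ≤ 1 * (Ml' * (Kq' * ‖z₁ - z₂‖)) :=
              mul_le_mul hθ1.le h9 (by positivity) zero_le_one
            rw [mul_assoc]; linarith
          have h10 : ‖z₁ - z₂‖ ≤ u * D + u * ‖z₂‖ := by
            have h11 : z₁ - z₂ = (z₁ - θ • z₂) - u • z₂ := by
              rw [hu_def]; module
            calc ‖z₁ - z₂‖ = ‖(z₁ - θ • z₂) - u • z₂‖ := by rw [h11]
              _ ≤ N + ‖u • z₂‖ := by rw [hN_def]; exact norm_sub_le _ _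
              _ = N + u * ‖z₂‖ := by rw [norm_smul, Real.norm_eq_abs, abs_of_pos hu]
              _ = u * D + u * ‖z₂‖ := by rw [huD]
          have h12 : D ≤ 1 + D ^ α := by
            rcases le_or_gt D 1 with h | h
            · linarith
            · have h13 : D ^ (1:ℝ) ≤ D ^ α := by
                exact Real.rpow_le_rpow_of_exponent_le h.le hα1.le
              rw [Real.rpow_one] at h13
              linarith
          have h14 : ‖z₁ - z₂‖ ≤ u * (D + 4 * R) := by
            nlinarith [norm_nonneg z₂]
          have h15 : Ml' * (Kq' * ‖z₁ - z₂‖) ≤ Ml' * Kq' * (u * (D + 4 * R)) := by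
            rw [← mul_assoc]
            exact mul_le_mul_of_nonneg_left h14 (mul_nonneg hMl hKq)
          have h16 : Ml' * Kq' * (u * (D + 4 * R)) ≤
              u * (Ml' * Kq' * (4 * R + 1) + Ml' * Kq' * D ^ α) := by
            have H := mul_le_mul_of_nonneg_left h12 (mul_nonneg (mul_nonneg hMl hKq) hu.le)
            have e1 : Ml' * Kq' * (u * (D + 4 * R))
                = Ml' * Kq' * u * D + u * (Ml' * Kq' * (4 * R)) := by ring
            have e2 : u * (Ml' * Kq' * (4 * R + 1) + Ml' * Kq' * D ^ α)
                = u * (Ml' * Kq' * (4 * R)) + Ml' * Kq' * u * (1 + D ^ α) := by ring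
            rw [e1, e2]
            linarith
          have h17 : Ml' * Kq' * D ^ α ≤ Γ * D ^ α := by
            apply mul_le_mul_of_nonneg_right _ hDα0
            rw [hΓ]
            have : (0:ℝ) ≤ 2 * Ml' * Mq' / R ^ α := by positivity
            linarith
          have hMM : (0:ℝ) ≤ u * (4 * Ml' * Mq') := by positivity
          have h18 := mul_le_mul_of_nonneg_left h17 hu.le
          have e4 : u * (4 * Ml' * Mq' + Ml' * Kq' * (4 * R + 1) + Γ * D ^ α)
              = u * (4 * Ml' * Mq') + u * (Ml' * Kq' * (4 * R + 1) + Ml' * Kq' * D ^ α)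
                + (u * (Γ * D ^ α) - u * (Ml' * Kq' * D ^ α)) := by ring
          rw [e4]
          linarith
        · rcases le_or_gt ‖z₁‖ R with hz1 | hz1
          · -- far case: u * D^α ≥ R^α
            have hN_ge : R ≤ N := by
              have h1 : ‖θ • z₂‖ - ‖z₁‖ ≤ ‖θ • z₂ - z₁‖ := norm_sub_norm_le _ _
              rw [norm_sub_rev] at h1
              rw [norm_smul, Real.norm_eq_abs, abs_of_pos hθ0] at h1
              nlinarith [norm_nonneg z₂]
            have hD_ge : R / u ≤ D := by
              rw [hD_def]; gcongr
            have h3 : (R / u) ^ α ≤ D ^ α :=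
              Real.rpow_le_rpow (by positivity) hD_ge (by linarith)
            have h4 : R ^ α / u ^ α ≤ D ^ α := by
              rwa [Real.div_rpow hR.le hu.le] at h3
            have h5 : u ^ α ≤ u := by
              have h5' := Real.rpow_le_rpow_of_exponent_ge hu (by linarith : u ≤ 1)
                (by linarith : (1:ℝ) ≤ α)
              rwa [Real.rpow_one] at h5'
            have huα : (0:ℝ) < u ^ α := Real.rpow_pos_of_pos hu α
            have h7 : R ^ α / u ≤ R ^ α / u ^ α := by gcongr
            have h8 : R ^ α / u ≤ D ^ α := h7.trans h4
            have h6 : R ^ α ≤ u * D ^ α := by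
              have := mul_le_mul_of_nonneg_left h8 hu.le
              rwa [mul_div_cancel₀ _ hu.ne'] at this
            have hc : (0:ℝ) ≤ 2 * Ml' * Mq' / R ^ α := by positivity
            have h9 : 2 * Ml' * Mq' ≤ (2 * Ml' * Mq' / R ^ α) * (u * D ^ α) := by
              calc 2 * Ml' * Mq' = (2 * Ml' * Mq' / R ^ α) * R ^ α :=
                    (div_mul_cancel₀ _ hRα.ne').symm
                _ ≤ _ := mul_le_mul_of_nonneg_left h6 hc
            have h10 : θ * |l y₂| * |q z₁ - q z₂| ≤ 2 * Ml' * Mq' := by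
              rw [mul_assoc]
              have h1 : |l y₂| * |q z₁ - q z₂| ≤ Ml' * (2 * Mq') :=
                mul_le_mul hl2 habs (abs_nonneg _) hMl
              have h2 : θ * (|l y₂| * |q z₁ - q z₂|) ≤ 1 * (Ml' * (2 * Mq')) :=
                mul_le_mul hθ1.le h1 (by positivity) zero_le_one
              linarith
            have h11 : (2 * Ml' * Mq' / R ^ α) * (u * D ^ α) ≤ u * (Γ * D ^ α) := by
              rw [hΓ]
              have e1 : u * ((Ml' * Kq' + 2 * Ml' * Mq' / R ^ α) * D ^ α)
                  = (2 * Ml' * Mq' / R ^ α) * (u * D ^ α)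
                    + u * (Ml' * Kq') * D ^ α := by ring
              rw [e1]
              have : (0:ℝ) ≤ u * (Ml' * Kq') * D ^ α := by positivity
              linarith
            have hMM : (0:ℝ) ≤ u * (4 * Ml' * Mq') := by positivity
            have e2 : u * (4 * Ml' * Mq' + Ml' * Kq' * (4 * R + 1) + Γ * D ^ α)
                = u * (4 * Ml' * Mq') + u * (Ml' * Kq' * (4 * R + 1)) + u * (Γ * D ^ α) := by
              ring
            rw [e2]
            linarith
          · -- both outside support
            have hq10 : q z₁ = 0 := hq_supp z₁ hz1
            have hq20 : q z₂ = 0 := hq_supp z₂ (by linarith)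
            rw [hq10, hq20]
            simp only [sub_zero, abs_zero, mul_zero]
            positivity
    calc |l y₁ * q z₁ - θ * (l y₂ * q z₂)|
        = |q z₁ * (l y₁ - θ * l y₂) + θ * l y₂ * (q z₁ - q z₂)| := by congr 1; ring
      _ ≤ |q z₁ * (l y₁ - θ * l y₂)| + |θ * l y₂ * (q z₁ - q z₂)| := abs_add_le _ _
      _ = |q z₁| * |l y₁ - θ * l y₂| + θ * |l y₂| * |q z₁ - q z₂| := by
          rw [abs_mul, abs_mul, abs_mul, abs_of_pos hθ0]
      _ ≤ u * (Mq' * Ml' + Mq' * Kl' * |y₂| + Mq' * Kl' * Dy)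
          + u * (4 * Ml' * Mq' + Ml' * Kq' * (4 * R + 1) + Γ * D ^ α) :=
          add_le_add hT1 hT2
      _ = u * (F + B * |y₂| + B * Dy + Γ * D ^ α) := by rw [hF, hB]; ring
  refine ⟨F, B, Γ, by rw [hF]; positivity, by rw [hB]; positivity, by rw [hΓ]; positivity,
    ?_, ?_⟩
  · intro y₁ y₂ z₁ z₂ θ hθ0 hθ1 _
    exact (le_abs_self _).trans (key y₁ y₂ z₁ z₂ θ hθ0 hθ1)
  · intro y₁ y₂ z₁ z₂ θ hθ0 hθ1 _
    exact (neg_le_abs _).trans (key y₁ y₂ z₁ z₂ θ hθ0 hθ1)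
end

section
/- Let α ∈ (1,2), and let f, u, v, k₁, k₂, c₁, c₂, c₃ ≥ 0 and a ≥ 0 be real numbers, with k₁, k₂ > 0. Let g : ℝ × ℝ → ℝ be a continuous function satisfying for all (y,z) ∈ ℝ × ℝ: (A1) |g(y,z)| ≤ f + u|y| + v|z|^α; (A2)(i) sgn(y₁ − y₂)(g(y₁,z) − g(y₂,z)) ≤ k₁|y₁ − y₂| for all y₁, y₂ ≤ 0 and all z; (A2)(ii) |g(y₁,z) − g(y₂,z)| ≤ k₂|y₁ − y₂| for all y₁, y₂ ≥ 0 and all z; (A3)(i) |g(y,z₁) − g(y,z₂)| ≤ c₁|z₁ − z₂| for all z₁, z₂ ∈ [−a,a] and all y; (A3)(ii) for each y, z ↦ g(y,z) is convex on (−∞,−a] and convex on [a,∞); (A4) g(y,z) − g(y,a) ≥ −c₂(z−a) for all z ≥ a and all y, and g(y,z) − g(y,−a) ≥ c₃(z+a) for all z ≤ −a and all y. Set c := max(c₁, c₂, c₃). Then for all (y₁,z₁), (y₂,z₂) ∈ ℝ² and θ ∈ (0,1) with y₁ > θy₂: g(y₁,z₁) − θg(y₂,z₂) ≤ (1−θ)·[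 (23f + 38va^α + 2c + 11ca) + (23u + k₁ + k₂)|y₂| + (23u + k₁ + k₂)|δ_θy| + (4v + 2c)|δ_θz|^α ], where δ_θy := (y₁ − θy₂)/(1−θ) and δ_θz := (z₁ − θz₂)/(1−θ). -/
lemma le_one_add_rpow {α t : ℝ} (hα : 1 ≤ α) (ht : 0 ≤ t) : t ≤ 1 + t ^ α := by
  rcases le_total t 1 with h | h
  · have : (0:ℝ) ≤ t ^ α := Real.rpow_nonneg ht α
    linarith
  · have h1 : t ^ (1:ℝ) ≤ t ^ α := Real.rpow_le_rpow_of_exponent_le h hα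
    rw [Real.rpow_one] at h1; linarith

set_option maxHeartbeats 1000000 in
lemma zlem (α F v c a : ℝ) (hα : 1 ≤ α) (hF : 0 ≤ F) (hv : 0 ≤ v) (hc : 0 ≤ c) (ha : 0 ≤ a)
    (h : ℝ → ℝ)
    (hb : ∀ z, |h z| ≤ F + v * |z| ^ α)
    (hlip : ∀ z z', z ∈ Set.Icc (-a) a → z' ∈ Set.Icc (-a) a → |h z - h z'| ≤ c * |z - z'|)
    (hcL : ConvexOn ℝ (Set.Iic (-a)) h) (hcR : ConvexOn ℝ (Set.Ici a) h)
    (h4R : ∀ z, a ≤ z → -c * (z - a) ≤ h z - h a)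
    (h4L : ∀ z, z ≤ -a → c * (z + a) ≤ h z - h (-a))
    (θ z₂ w : ℝ) (hθ0 : 0 < θ) (hθ1 : θ < 1) (hzw : z₂ ≤ w) :
    h (θ * z₂ + (1 - θ) * w) - θ * h z₂ ≤
      (1 - θ) * (2*F + 2*v*a^α + 2*v*|w|^α + 2*c*|w| + 2*c*a) := by
  set z₁ := θ * z₂ + (1 - θ) * w with hz₁
  clear_value z₁
  have hθ' : (0:ℝ) < 1 - θ := by linarith
  have hz₂₁ : z₂ ≤ z₁ := by nlinarith
  have hz₁w : z₁ ≤ w := by nlinarith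
  have hwa : (0:ℝ) ≤ |w| ^ α := Real.rpow_nonneg (abs_nonneg w) α
  have haa : (0:ℝ) ≤ a ^ α := Real.rpow_nonneg ha α
  have hwabs : w ≤ |w| := le_abs_self w
  have hbw : h w ≤ F + v * |w| ^ α := (abs_le.mp (hb w)).2
  have hba : |h a| ≤ F + v * a ^ α := by simpa [abs_of_nonneg ha] using hb a
  have hbma : |h (-a)| ≤ F + v * a ^ α := by simpa [abs_of_nonneg ha] using hb (-a)
  have hFva : (0:ℝ) ≤ F + v * a ^ α := by positivity
  have hFvw : (0:ℝ) ≤ F + v * |w| ^ α := by positivity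
  have hn1 : (0:ℝ) ≤ (1-θ) * (c * (|w| - w)) := by
    apply mul_nonneg hθ'.le (mul_nonneg hc (by linarith))
  have hn2 : (0:ℝ) ≤ (1-θ) * (c * |w|) := by positivity
  have hn3 : (0:ℝ) ≤ (1-θ) * (c * a) := by positivity
  have hn4 : (0:ℝ) ≤ (1-θ) * (v * a^α) := by positivity
  have hn5 : (0:ℝ) ≤ (1-θ) * (v * |w|^α) := by positivity
  have hn6 : (0:ℝ) ≤ (1-θ) * F := by positivity
  rcases le_or_gt w (-a) with hA | hA
  · -- all points in Iic (-a)
    have hcv := hcL.2 (show z₂ ∈ Set.Iic (-a) from le_trans hzw hA)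
      (show w ∈ Set.Iic (-a) from hA) hθ0.le hθ'.le (by ring)
    simp only [smul_eq_mul] at hcv
    rw [← hz₁] at hcv
    have := mul_le_mul_of_nonneg_left hbw hθ'.le
    linarith
  · rcases le_or_gt a z₂ with hB | hB
    · -- all points in Ici a
      have hcv := hcR.2 (show z₂ ∈ Set.Ici a from hB)
        (show w ∈ Set.Ici a from le_trans hB hzw) hθ0.le hθ'.le (by ring)
      simp only [smul_eq_mul] at hcv
      rw [← hz₁] at hcv
      have := mul_le_mul_of_nonneg_left hbw hθ'.le
      linarith
    · rcases le_or_gt z₂ (-a) with hC | hD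
      · -- z₂ ≤ -a < w
        rcases le_or_gt z₁ (-a) with hC1 | hC2
        · -- C1 : z₁ ≤ -a
          rcases eq_or_lt_of_le hC with heq | hlt
          · -- z₂ = -a hence z₁ = -a
            have hz1 : z₁ = -a := le_antisymm hC1 (heq ▸ hz₂₁)
            have hE : h z₁ = h z₂ := by rw [hz1, heq]
            have hb2 : h z₂ ≤ F + v * a ^ α := by
              rw [heq]; exact le_trans (le_abs_self _) hbma
            have := mul_le_mul_of_nonneg_left hb2 hθ'.le
            linarith
          · set lam := (z₁ + a) / (z₂ + a) with hlamdef
            clear_value lam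
            have hne : z₂ + a ≠ 0 := by linarith
            have hlam : lam * (z₂ + a) = z₁ + a := by rw [hlamdef]; exact div_mul_cancel₀ _ hne
            have hlam0 : 0 ≤ lam := by
              by_contra hx; push_neg at hx
              have hpos : 0 < lam * (z₂ + a) := mul_pos_of_neg_of_neg hx (by linarith)
              rw [hlam] at hpos; linarith
            have hlam1 : lam ≤ 1 := by
              by_contra hx; push_neg at hx
              have hneg : (lam - 1) * (z₂ + a) < 0 :=
                mul_neg_of_pos_of_neg (by linarith) (by linarith)
              nlinarith [hlam]
            have key : (lam - θ) * (z₂ + a) = (1 - θ) * (w + a) := by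
              linear_combination hlam + hz₁
            have hlamθ : lam ≤ θ := by
              by_contra hx; push_neg at hx
              have h1 : (lam - θ) * (z₂ + a) < 0 :=
                mul_neg_of_pos_of_neg (by linarith) (by linarith)
              rw [key] at h1; nlinarith
            have hcv := hcL.2 (show z₂ ∈ Set.Iic (-a) from hC)
              (Set.mem_Iic.mpr (le_refl (-a))) hlam0 (sub_nonneg.mpr hlam1) (by ring)
            simp only [smul_eq_mul] at hcv
            have harg : lam * z₂ + (1 - lam) * (-a) = z₁ := by linear_combination hlam
            rw [harg] at hcv
            have hA4 := h4L z₂ hC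
            have hmul : (lam - θ) * h z₂ ≤ (lam - θ) * (h (-a) + c * (z₂ + a)) := by
              apply mul_le_mul_of_nonpos_left (by linarith) (by linarith)
            have hma : h (-a) ≤ F + v * a ^ α := le_trans (le_abs_self _) hbma
            have hfin : (1 - θ) * h (-a) ≤ (1-θ) * (F + v * a ^ α) :=
              mul_le_mul_of_nonneg_left hma hθ'.le
            have hck := mul_le_mul_of_nonneg_left key.le hc
            linarith [hck]
        · rcases le_or_gt z₁ a with hC2a | hC2b
          · -- C2a : -a < z₁ ≤ a
            have hmem1 : z₁ ∈ Set.Icc (-a) a := ⟨hC2.le, hC2a⟩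
            have hmemma : -a ∈ Set.Icc (-a) a := ⟨le_rfl, by linarith⟩
            have hl := (abs_le.mp (hlip z₁ (-a) hmem1 hmemma)).2
            have habs : |z₁ - (-a)| = z₁ + a := by
              rw [abs_of_nonneg (by linarith)]; ring
            rw [habs] at hl
            have hth := mul_nonneg hθ0.le (show (0:ℝ) ≤ -(z₂+a) by linarith)
            have hz1a : z₁ + a ≤ (1 - θ) * (w + a) := by linarith
            have hA4 := h4L z₂ hC
            have hθz : θ * (-(z₂ + a)) ≤ (1 - θ) * (w + a) := by linarith
            have hma : h (-a) ≤ F + v * a ^ α := le_trans (le_abs_self _) hbma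
            have e1 : c * (z₁ + a) ≤ c * ((1-θ)*(w+a)) := mul_le_mul_of_nonneg_left hz1a hc
            have e2 : c * (θ * (-(z₂+a))) ≤ c * ((1-θ)*(w+a)) := mul_le_mul_of_nonneg_left hθz hc
            have e3 := mul_le_mul_of_nonneg_left hA4 hθ0.le
            have hfin : (1 - θ) * h (-a) ≤ (1-θ) * (F + v * a ^ α) :=
              mul_le_mul_of_nonneg_left hma hθ'.le
            linarith
          · -- C2b : a < z₁ ≤ w, z₂ ≤ -a
            have hwgta : a < w := lt_of_lt_of_le hC2b hz₁w
            set mu := (w - z₁) / (w - a) with hmudef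
            clear_value mu
            have hne : w - a ≠ 0 := by linarith
            have hmu : mu * (w - a) = w - z₁ := by rw [hmudef]; exact div_mul_cancel₀ _ hne
            have hmu0 : 0 ≤ mu := by rw [hmudef]; exact div_nonneg (by linarith) (by linarith)
            have hmu1 : mu ≤ 1 := by
              rw [hmudef, div_le_one (by linarith)]; linarith
            have key : (mu - θ) * (w - a) = θ * (a - z₂) := by
              linear_combination hmu - hz₁
            have hmuθ : θ ≤ mu := by
              by_contra hx; push_neg at hx
              have h1 : (mu - θ) * (w - a) < 0 :=
                mul_neg_of_neg_of_pos (by linarith) (by linarith)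
              rw [key] at h1
              linarith [mul_nonneg hθ0.le (show (0:ℝ) ≤ a - z₂ by linarith)]
            have hcv := hcR.2 (Set.mem_Ici.mpr (le_refl a))
              (show w ∈ Set.Ici a from hwgta.le) hmu0 (sub_nonneg.mpr hmu1) (by ring)
            simp only [smul_eq_mul] at hcv
            have harg : mu * a + (1 - mu) * w = z₁ := by linear_combination -hmu
            rw [harg] at hcv
            have hmema : a ∈ Set.Icc (-a) a := ⟨by linarith, le_rfl⟩
            have hmemma : -a ∈ Set.Icc (-a) a := ⟨le_rfl, by linarith⟩
            have hl := (abs_le.mp (hlip a (-a) hmema hmemma)).2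
            have habs : |a - (-a)| = 2*a := by
              rw [abs_of_nonneg (by linarith)]; ring
            rw [habs] at hl
            have hA4 := h4L z₂ hC
            have e3 := mul_le_mul_of_nonneg_left hA4 hθ0.le
            have hθz : θ * (-(z₂ + a)) ≤ (1 - θ) * w - (1+θ) * a := by linarith
            have e2 : c * (θ * (-(z₂+a))) ≤ c * ((1-θ)*w - (1+θ)*a) :=
              mul_le_mul_of_nonneg_left hθz hc
            have p5 : mu * h a ≤ mu * (h (-a) + c * (2*a)) :=
              mul_le_mul_of_nonneg_left (by linarith) hmu0
            have p6a : (1 - mu) * h w ≤ (1 - mu) * (F + v * |w|^α) :=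
              mul_le_mul_of_nonneg_left hbw (by linarith)
            have p6b : (1 - mu) * (F + v * |w|^α) ≤ (1 - θ) * (F + v * |w|^α) :=
              mul_le_mul_of_nonneg_right (by linarith) hFvw
            have hma : h (-a) ≤ F + v * a ^ α := le_trans (le_abs_self _) hbma
            have p7a : (mu - θ) * h (-a) ≤ (mu - θ) * (F + v * a^α) :=
              mul_le_mul_of_nonneg_left hma (by linarith)
            have p7b : (mu - θ) * (F + v * a^α) ≤ (1 - θ) * (F + v * a^α) :=
              mul_le_mul_of_nonneg_right (by linarith) hFva
            have p8 : mu * (c * (2*a)) ≤ 1 * (c * (2*a)) :=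
              mul_le_mul_of_nonneg_right hmu1 (by positivity)
            linarith
      · -- -a < z₂ < a
        rcases le_or_gt z₁ a with hD1 | hD2
        · -- D1: z₁, z₂ in the band
          have hmem1 : z₁ ∈ Set.Icc (-a) a := ⟨by linarith, hD1⟩
          have hmem2 : z₂ ∈ Set.Icc (-a) a := ⟨hD.le, hB.le⟩
          have hl := (abs_le.mp (hlip z₁ z₂ hmem1 hmem2)).2
          have habs1 : z₁ - z₂ = (1-θ)*(w - z₂) := by rw [hz₁]; ring
          have habs : |z₁ - z₂| ≤ (1-θ)*(|w| + a) := by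
            rw [habs1, abs_mul, abs_of_nonneg hθ'.le]
            have h1 : |w - z₂| ≤ |w| + a := by
              have h2 := abs_le.mpr (⟨hD.le, hB.le⟩ : -a ≤ z₂ ∧ z₂ ≤ a)
              calc |w - z₂| ≤ |w| + |z₂| := abs_sub _ _
                _ ≤ |w| + a := by linarith
            exact mul_le_mul_of_nonneg_left h1 hθ'.le
          have hl2 : h z₁ - h z₂ ≤ c * ((1-θ)*(|w|+a)) :=
            le_trans hl (mul_le_mul_of_nonneg_left habs hc)
          have hz2b : |z₂| ^ α ≤ a ^ α :=
            Real.rpow_le_rpow (abs_nonneg _) (abs_le.mpr ⟨hD.le, hB.le⟩) (by linarith)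
          have hz2u : h z₂ ≤ F + v * |z₂| ^ α := (abs_le.mp (hb z₂)).2
          have hvz : v * |z₂|^α ≤ v * a^α := mul_le_mul_of_nonneg_left hz2b hv
          have hfin : (1-θ) * h z₂ ≤ (1-θ) * (F + v * a^α) :=
            mul_le_mul_of_nonneg_left (by linarith) hθ'.le
          linarith
        · -- D2 : a < z₁ ≤ w, -a < z₂ < a
          have hwgta : a < w := lt_of_lt_of_le hD2 hz₁w
          set mu := (w - z₁) / (w - a) with hmudef
          clear_value mu
          have hne : w - a ≠ 0 := by linarith
          have hmu : mu * (w - a) = w - z₁ := by rw [hmudef]; exact div_mul_cancel₀ _ hne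
          have hmu0 : 0 ≤ mu := by rw [hmudef]; exact div_nonneg (by linarith) (by linarith)
          have hmu1 : mu ≤ 1 := by
            rw [hmudef, div_le_one (by linarith)]; linarith
          have key : (mu - θ) * (w - a) = θ * (a - z₂) := by
            linear_combination hmu - hz₁
          have hmuθ : θ ≤ mu := by
            by_contra hx; push_neg at hx
            have h1 : (mu - θ) * (w - a) < 0 :=
              mul_neg_of_neg_of_pos (by linarith) (by linarith)
            rw [key] at h1
            linarith [mul_nonneg hθ0.le (show (0:ℝ) ≤ a - z₂ by linarith)]
          have hcv := hcR.2 (Set.mem_Ici.mpr (le_refl a))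
            (show w ∈ Set.Ici a from hwgta.le) hmu0 (sub_nonneg.mpr hmu1) (by ring)
          simp only [smul_eq_mul] at hcv
          have harg : mu * a + (1 - mu) * w = z₁ := by linear_combination -hmu
          rw [harg] at hcv
          have hmema : a ∈ Set.Icc (-a) a := ⟨by linarith, le_rfl⟩
          have hmem2 : z₂ ∈ Set.Icc (-a) a := ⟨hD.le, hB.le⟩
          have hl := (abs_le.mp (hlip a z₂ hmema hmem2)).2
          have habs : |a - z₂| = a - z₂ := abs_of_nonneg (by linarith)
          rw [habs] at hl
          have hθz : θ * (a - z₂) ≤ (1 - θ) * (w - a) := by linarith [key, hmu1, hne]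
          have e2 : c * (θ * (a - z₂)) ≤ c * ((1-θ)*(w-a)) :=
            mul_le_mul_of_nonneg_left hθz hc
          have e3 : θ * (h a - h z₂) ≤ θ * (c * (a - z₂)) :=
            mul_le_mul_of_nonneg_left (by linarith) hθ0.le
          have p6a : (1 - mu) * h w ≤ (1 - mu) * (F + v * |w|^α) :=
            mul_le_mul_of_nonneg_left hbw (by linarith)
          have p6b : (1 - mu) * (F + v * |w|^α) ≤ (1 - θ) * (F + v * |w|^α) :=
            mul_le_mul_of_nonneg_right (by linarith) hFvw
          have hmaa : h a ≤ F + v * a ^ α := le_trans (le_abs_self _) hba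
          have p7a : (mu - θ) * h a ≤ (mu - θ) * (F + v * a^α) :=
            mul_le_mul_of_nonneg_left hmaa (by linarith)
          have p7b : (mu - θ) * (F + v * a^α) ≤ (1 - θ) * (F + v * a^α) :=
            mul_le_mul_of_nonneg_right (by linarith) hFva
          linarith

set_option maxHeartbeats 2000000 in
/-- Proposition 5.2, stated pointwise for a deterministic generator on
`ℝ × ℝ` (`d = 1`): under assumptions (A1)-(A4), the generator `g` satisfies
the (5.1)-type θ-difference inequality with the displayed constants.
Here `sgn x = 1` if `x > 0` and `-1` otherwise. -/
theorem stmt_15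
    (α : ℝ) (hα : α ∈ Set.Ioo (1 : ℝ) 2)
    (f u v k₁ k₂ c₁ c₂ c₃ a : ℝ)
    (hf : 0 ≤ f) (hu : 0 ≤ u) (hv : 0 ≤ v)
    (hk₁ : 0 < k₁) (hk₂ : 0 < k₂)
    (hc₁ : 0 ≤ c₁) (hc₂ : 0 ≤ c₂) (hc₃ : 0 ≤ c₃) (ha : 0 ≤ a)
    (g : ℝ → ℝ → ℝ)
    (hg_cont : Continuous (fun p : ℝ × ℝ => g p.1 p.2))
    (hA1 : ∀ y z : ℝ, |g y z| ≤ f + u * |y| + v * |z| ^ α)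
    (hA2i : ∀ y₁ y₂ z : ℝ, y₁ ≤ 0 → y₂ ≤ 0 →
      (if 0 < y₁ - y₂ then (1 : ℝ) else -1) * (g y₁ z - g y₂ z) ≤ k₁ * |y₁ - y₂|)
    (hA2ii : ∀ y₁ y₂ z : ℝ, 0 ≤ y₁ → 0 ≤ y₂ →
      |g y₁ z - g y₂ z| ≤ k₂ * |y₁ - y₂|)
    (hA3i : ∀ y z₁ z₂ : ℝ, z₁ ∈ Set.Icc (-a) a → z₂ ∈ Set.Icc (-a) a →
      |g y z₁ - g y z₂| ≤ c₁ * |z₁ - z₂|)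
    (hA3ii : ∀ y : ℝ, ConvexOn ℝ (Set.Iic (-a)) (g y) ∧
      ConvexOn ℝ (Set.Ici a) (g y))
    (hA4 : ∀ y z : ℝ, (a ≤ z → g y z - g y a ≥ -c₂ * (z - a)) ∧
      (z ≤ -a → g y z - g y (-a) ≥ c₃ * (z + a)))
    (c : ℝ) (hc : c = max (max c₁ c₂) c₃) :
    ∀ (y₁ z₁ y₂ z₂ θ : ℝ), 0 < θ → θ < 1 → θ * y₂ < y₁ →
      g y₁ z₁ - θ * g y₂ z₂ ≤
        (1 - θ) * ((23 * f + 38 * v * a ^ α + 2 * c + 11 * c * a)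
          + (23 * u + k₁ + k₂) * |y₂|
          + (23 * u + k₁ + k₂) * |(y₁ - θ * y₂) / (1 - θ)|
          + (4 * v + 2 * c) * |(z₁ - θ * z₂) / (1 - θ)| ^ α) := by
  intro y₁ z₁ y₂ z₂ θ hθ0 hθ1 hy
  have hα1 : (1:ℝ) < α := hα.1
  have hθ' : (0:ℝ) < 1 - θ := by linarith
  have h1θ : (1:ℝ) - θ ≠ 0 := ne_of_gt hθ'
  set w := (z₁ - θ * z₂) / (1 - θ) with hw
  set dy := (y₁ - θ * y₂) / (1 - θ) with hdy
  clear_value w dy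
  have hz : z₁ = θ * z₂ + (1 - θ) * w := by rw [hw]; field_simp; ring
  have hyy : y₁ = θ * y₂ + (1 - θ) * dy := by rw [hdy]; field_simp; ring
  have hc1c : c₁ ≤ c := by rw [hc]; exact le_trans (le_max_left _ _) (le_max_left _ _)
  have hc2c : c₂ ≤ c := by rw [hc]; exact le_trans (le_max_right _ _) (le_max_left _ _)
  have hc3c : c₃ ≤ c := by rw [hc]; exact le_max_right _ _
  have hc0 : (0:ℝ) ≤ c := le_trans hc₁ hc1c
  have hwa : (0:ℝ) ≤ |w| ^ α := Real.rpow_nonneg (abs_nonneg w) α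
  have haa : (0:ℝ) ≤ a ^ α := Real.rpow_nonneg ha α
  have hF : (0:ℝ) ≤ f + u * |y₁| := by positivity
  have hb : ∀ z, |g y₁ z| ≤ (f + u * |y₁|) + v * |z| ^ α := by
    intro z; have := hA1 y₁ z; linarith
  have hlip : ∀ z z', z ∈ Set.Icc (-a) a → z' ∈ Set.Icc (-a) a →
      |g y₁ z - g y₁ z'| ≤ c * |z - z'| := by
    intro z z' m m'
    exact le_trans (hA3i y₁ z z' m m') (mul_le_mul_of_nonneg_right hc1c (abs_nonneg _))
  have h4R : ∀ z, a ≤ z → -c * (z - a) ≤ g y₁ z - g y₁ a := by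
    intro z hza
    have h1 := (hA4 y₁ z).1 hza
    linarith [mul_nonneg (sub_nonneg.mpr hc2c) (sub_nonneg.mpr hza)]
  have h4L : ∀ z, z ≤ -a → c * (z + a) ≤ g y₁ z - g y₁ (-a) := by
    intro z hza
    have h1 := (hA4 y₁ z).2 hza
    linarith [mul_nonneg (sub_nonneg.mpr hc3c) (show (0:ℝ) ≤ -(z+a) by linarith)]
  -- z-step
  have Hz : g y₁ z₁ - θ * g y₁ z₂ ≤
      (1-θ) * (2*(f + u*|y₁|) + 2*v*a^α + 2*v*|w|^α + 2*c*|w| + 2*c*a) := by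
    rcases le_total z₂ w with hzw | hzw
    · have Z := zlem α (f + u*|y₁|) v c a hα1.le hF hv hc0 ha (g y₁) hb hlip
        (hA3ii y₁).1 (hA3ii y₁).2 h4R h4L θ z₂ w hθ0 hθ1 hzw
      rw [← hz] at Z
      exact Z
    · have hb' : ∀ z, |g y₁ (-z)| ≤ (f + u * |y₁|) + v * |z| ^ α := by
        intro z; simpa [abs_neg] using hb (-z)
      have hlip' : ∀ z z', z ∈ Set.Icc (-a) a → z' ∈ Set.Icc (-a) a →
          |g y₁ (-z) - g y₁ (-z')| ≤ c * |z - z'| := by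
        intro z z' m m'
        have m2 : -z ∈ Set.Icc (-a) a := ⟨by linarith [m.2], by linarith [m.1]⟩
        have m2' : -z' ∈ Set.Icc (-a) a := ⟨by linarith [m'.2], by linarith [m'.1]⟩
        have := hlip (-z) (-z') m2 m2'
        have e : |(-z) - (-z')| = |z - z'| := by rw [← abs_neg]; ring_nf
        rw [e] at this; exact this
      have hcL' : ConvexOn ℝ (Set.Iic (-a)) (fun z => g y₁ (-z)) := by
        refine ⟨convex_Iic _, fun x hx y hyq p q hp hq hpq => ?_⟩
        have hx' : -x ∈ Set.Ici a := Set.mem_Ici.mpr (by linarith [Set.mem_Iic.mp hx])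
        have hy' : -y ∈ Set.Ici a := Set.mem_Ici.mpr (by linarith [Set.mem_Iic.mp hyq])
        have h2 := (hA3ii y₁).2.2 hx' hy' hp hq hpq
        simp only [smul_eq_mul] at h2 ⊢
        rw [show (-(p * x + q * y) : ℝ) = p * (-x) + q * (-y) by ring]
        exact h2
      have hcR' : ConvexOn ℝ (Set.Ici a) (fun z => g y₁ (-z)) := by
        refine ⟨convex_Ici _, fun x hx y hyq p q hp hq hpq => ?_⟩
        have hx' : -x ∈ Set.Iic (-a) := Set.mem_Iic.mpr (by linarith [Set.mem_Ici.mp hx])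
        have hy' : -y ∈ Set.Iic (-a) := Set.mem_Iic.mpr (by linarith [Set.mem_Ici.mp hyq])
        have h2 := (hA3ii y₁).1.2 hx' hy' hp hq hpq
        simp only [smul_eq_mul] at h2 ⊢
        rw [show (-(p * x + q * y) : ℝ) = p * (-x) + q * (-y) by ring]
        exact h2
      have h4R' : ∀ z, a ≤ z → -c * (z - a) ≤ g y₁ (-z) - g y₁ (-a) := by
        intro z hza
        have h1 := (hA4 y₁ (-z)).2 (by linarith : -z ≤ -a)
        linarith [mul_nonneg (sub_nonneg.mpr hc3c) (sub_nonneg.mpr hza)]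
      have h4L' : ∀ z, z ≤ -a → c * (z + a) ≤ g y₁ (-z) - g y₁ (-(-a)) := by
        intro z hza
        rw [neg_neg]
        have h1 := (hA4 y₁ (-z)).1 (by linarith : a ≤ -z)
        linarith [mul_nonneg (sub_nonneg.mpr hc2c) (show (0:ℝ) ≤ -(z+a) by linarith)]
      have Z := zlem α (f + u*|y₁|) v c a hα1.le hF hv hc0 ha (fun z => g y₁ (-z))
        hb' hlip' hcL' hcR' h4R' h4L' θ (-z₂) (-w) hθ0 hθ1 (by linarith)
      simp only [neg_neg, abs_neg] at Z
      have e1 : -(θ * -z₂ + (1 - θ) * -w) = z₁ := by rw [hz]; ring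
      rw [e1] at Z
      exact Z
  -- y-step
  have hy12 : y₁ - y₂ = (1-θ)*(dy - y₂) := by rw [hyy]; ring
  have habs_dy : |dy - y₂| ≤ |dy| + |y₂| := abs_sub _ _
  have hKpos : (0:ℝ) ≤ (1-θ)*(|dy| + |y₂|) := by positivity
  have hy12' : |y₁ - y₂| ≤ (1-θ)*(|dy| + |y₂|) := by
    rw [hy12, abs_mul, abs_of_nonneg hθ'.le]
    exact mul_le_mul_of_nonneg_left habs_dy hθ'.le
  have Hy : θ * (g y₁ z₂ - g y₂ z₂) ≤ (k₁ + k₂) * ((1-θ) * (|dy| + |y₂|)) := by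
    have step : ∀ d : ℝ, d ≤ (k₁ + k₂) * ((1-θ) * (|dy| + |y₂|)) →
        θ * d ≤ (k₁ + k₂) * ((1-θ) * (|dy| + |y₂|)) := by
      intro d hd
      have h1 : θ * d ≤ θ * ((k₁ + k₂) * ((1-θ) * (|dy| + |y₂|))) :=
        mul_le_mul_of_nonneg_left hd hθ0.le
      have h2 : θ * ((k₁ + k₂) * ((1-θ) * (|dy| + |y₂|))) ≤
          1 * ((k₁ + k₂) * ((1-θ) * (|dy| + |y₂|))) :=
        mul_le_mul_of_nonneg_right hθ1.le (by positivity)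
      linarith
    rcases le_or_gt 0 y₂ with hy2 | hy2
    · have hy1 : 0 ≤ y₁ := le_of_lt (lt_of_le_of_lt (mul_nonneg hθ0.le hy2) hy)
      have hd := (abs_le.mp (hA2ii y₁ y₂ z₂ hy1 hy2)).2
      apply step
      have := mul_le_mul_of_nonneg_left hy12' hk₂.le
      linarith [mul_nonneg hk₁.le hKpos]
    · rcases le_or_gt y₁ 0 with hy1 | hy1
      · have hpos : 0 < y₁ - y₂ := by linarith [mul_pos hθ' (neg_pos.mpr hy2)]
        have hd := hA2i y₁ y₂ z₂ hy1 hy2.le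
        rw [if_pos hpos, one_mul] at hd
        apply step
        have := mul_le_mul_of_nonneg_left hy12' hk₁.le
        linarith [mul_nonneg hk₂.le hKpos]
      · have e1 := (abs_le.mp (hA2ii y₁ 0 z₂ hy1.le le_rfl)).2
        have e1' : |y₁ - 0| = y₁ := by rw [sub_zero, abs_of_pos hy1]
        rw [e1'] at e1
        have e2 := hA2i 0 y₂ z₂ le_rfl hy2.le
        rw [if_pos (by linarith : (0:ℝ) < 0 - y₂), one_mul] at e2
        have e2' : |0 - y₂| = -y₂ := by rw [zero_sub, abs_of_pos (by linarith : (0:ℝ) < -y₂)]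
        rw [e2'] at e2
        apply step
        have hsum : g y₁ z₂ - g y₂ z₂ ≤ (k₁ + k₂) * (y₁ - y₂) := by
          linarith [mul_pos hk₁ hy1, mul_pos hk₂ (neg_pos.mpr hy2)]
        have h3 : y₁ - y₂ ≤ (1-θ)*(|dy| + |y₂|) := le_trans (le_abs_self _) hy12'
        linarith [mul_le_mul_of_nonneg_left h3 (by positivity : (0:ℝ) ≤ k₁ + k₂)]
  -- combine
  have hy1abs : |y₁| ≤ |y₂| + |dy| := by
    have h1 : |y₁| ≤ |θ * y₂| + |(1-θ) * dy| := by
      rw [hyy]; exact abs_add_le _ _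
    rw [abs_mul, abs_mul, abs_of_nonneg hθ0.le, abs_of_nonneg hθ'.le] at h1
    linarith [mul_nonneg hθ'.le (abs_nonneg y₂), mul_nonneg hθ0.le (abs_nonneg dy)]
  have hwineq : |w| ≤ 1 + |w|^α := le_one_add_rpow hα1.le (abs_nonneg w)
  have inner : 2*(f + u*|y₁|) + 2*v*a^α + 2*v*|w|^α + 2*c*|w| + 2*c*a
      + (k₁ + k₂) * (|dy| + |y₂|) ≤
      (23 * f + 38 * v * a ^ α + 2 * c + 11 * c * a)
        + (23 * u + k₁ + k₂) * |y₂| + (23 * u + k₁ + k₂) * |dy|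
        + (4 * v + 2 * c) * |w| ^ α := by
    have p1 : u * |y₁| ≤ u * (|y₂| + |dy|) := mul_le_mul_of_nonneg_left hy1abs hu
    have p2 : c * |w| ≤ c * (1 + |w|^α) := mul_le_mul_of_nonneg_left hwineq hc0
    linarith [mul_nonneg hu (abs_nonneg y₂), mul_nonneg hu (abs_nonneg dy),
      mul_nonneg hv haa, mul_nonneg hv hwa, mul_nonneg hc0 ha]
  have main := mul_le_mul_of_nonneg_left inner hθ'.le
  linarith [Hz, Hy, main]
end

section
/- Let α ∈ (1,2) and α* := α/(α−1). Let f, ū, v̄, c̄, k₁, k₂ ≥ 0 and a ≥ 0 be real numbers, with k₁, k₂ > 0. Let g : ℝ × ℝ → ℝ be a continuous function satisfying for all (y,z) ∈ ℝ × ℝ: (A2)(i) sgn(y₁ − y₂)(g(y₁,z) − g(y₂,z)) ≤ k₁|y₁ − y₂| for all y₁, y₂ ≤ 0 and all z; (A2)(ii) |g(y₁,z) − g(y₂,z)| ≤ k₂|y₁ − y₂| for all y₁, y₂ ≥ 0 and all z; (A5) |g(y,z)| ≤ f + ū|y| + v̄[ln(e + |z|)]^{α*/2}; (A6)(i) |g(y,z₁)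 − g(y,z₂)| ≤ c̄|z₁ − z₂| for all z₁, z₂ ∈ ℝ and all y; (A6)(ii) for each y, z ↦ g(y,z) is nonincreasing on (−∞,−a] and nondecreasing on [a,∞). Then for all (y₁,z₁),(y₂,z₂) ∈ ℝ² and θ ∈ (0,1) with y₁ > θy₂: g(y₁,z₁) − θg(y₂,z₂) ≤ (1−θ)·[ (12f + 11v̄[ln(e+a)]^{α*/2} + 4c̄a + 4c̄) + (k₁ + k₂ + 12ū)|y₂| + v̄[ln(e + |z₂|)]^{α*/2} + (k₁ + k₂ + 12ū)|δ_θy| + 4c̄|δ_θz|^α ], where δ_θy := (y₁ − θy₂)/(1−θ) and δ_θz := (z₁ − θz₂)/(1−θ). -/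
set_option maxHeartbeats 1000000

/-- Proposition 5.3, stated pointwise for a deterministic generator on
`ℝ × ℝ` (`d = 1`): under assumptions (A2), (A5) and (A6), the generator `g`
satisfies the extended convexity inequality (4.1) with the displayed constants.
Here `sgn x = 1` if `x > 0` and `-1` otherwise. -/
theorem stmt_16
    (α αs : ℝ) (hα : α ∈ Set.Ioo (1 : ℝ) 2) (hαs : αs = α / (α - 1))
    (f ub vb cb k₁ k₂ a : ℝ)
    (hf : 0 ≤ f) (hub : 0 ≤ ub) (hvb : 0 ≤ vb) (hcb : 0 ≤ cb)
    (hk₁ : 0 < k₁) (hk₂ : 0 < k₂) (ha : 0 ≤ a)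
    (g : ℝ → ℝ → ℝ)
    (hg_cont : Continuous (fun p : ℝ × ℝ => g p.1 p.2))
    (hA2i : ∀ y₁ y₂ z : ℝ, y₁ ≤ 0 → y₂ ≤ 0 →
      (if 0 < y₁ - y₂ then (1 : ℝ) else -1) * (g y₁ z - g y₂ z) ≤ k₁ * |y₁ - y₂|)
    (hA2ii : ∀ y₁ y₂ z : ℝ, 0 ≤ y₁ → 0 ≤ y₂ →
      |g y₁ z - g y₂ z| ≤ k₂ * |y₁ - y₂|)
    (hA5 : ∀ y z : ℝ, |g y z| ≤
      f + ub * |y| + vb * (Real.log (Real.exp 1 + |z|)) ^ (αs / 2))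
    (hA6i : ∀ y z₁ z₂ : ℝ, |g y z₁ - g y z₂| ≤ cb * |z₁ - z₂|)
    (hA6ii : ∀ y : ℝ, AntitoneOn (g y) (Set.Iic (-a)) ∧
      MonotoneOn (g y) (Set.Ici a)) :
    ∀ (y₁ z₁ y₂ z₂ θ : ℝ), 0 < θ → θ < 1 → θ * y₂ < y₁ →
      g y₁ z₁ - θ * g y₂ z₂ ≤
        (1 - θ) * ((12 * f + 11 * vb * (Real.log (Real.exp 1 + a)) ^ (αs / 2)
            + 4 * cb * a + 4 * cb)
          + (k₁ + k₂ + 12 * ub) * |y₂|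
          + vb * (Real.log (Real.exp 1 + |z₂|)) ^ (αs / 2)
          + (k₁ + k₂ + 12 * ub) * |(y₁ - θ * y₂) / (1 - θ)|
          + 4 * cb * |(z₁ - θ * z₂) / (1 - θ)| ^ α) := by
  intro y₁ z₁ y₂ z₂ θ hθ0 hθ1 hy
  have hs : (0:ℝ) < 1 - θ := by linarith
  have hk : (0:ℝ) ≤ k₁ + k₂ := by linarith
  set La : ℝ := (Real.log (Real.exp 1 + a)) ^ (αs / 2) with hLadef
  set L2 : ℝ := (Real.log (Real.exp 1 + |z₂|)) ^ (αs / 2) with hL2def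
  set Dy : ℝ := |(y₁ - θ * y₂) / (1 - θ)| with hDydef
  set T : ℝ := |(z₁ - θ * z₂) / (1 - θ)| with hTdef
  have hTnn : (0:ℝ) ≤ T := abs_nonneg _
  have hDynn : (0:ℝ) ≤ Dy := abs_nonneg _
  -- rewriting the abs of quotients
  have hw : |z₁ - θ * z₂| = (1 - θ) * T := by
    rw [hTdef, abs_div, abs_of_pos hs]
    field_simp
  have hwy : |y₁ - θ * y₂| = (1 - θ) * Dy := by
    rw [hDydef, abs_div, abs_of_pos hs]
    field_simp
  -- Step 1 : the y-increment
  have hY : g y₁ z₂ - g y₂ z₂ ≤ (k₁ + k₂) * |y₁ - y₂| := by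
    have habs : (0:ℝ) ≤ |y₁ - y₂| := abs_nonneg _
    rcases le_or_gt 0 y₂ with h2 | h2
    · have h1 : 0 ≤ y₁ := le_trans (mul_nonneg hθ0.le h2) hy.le
      have h' := (abs_le.mp (hA2ii y₁ y₂ z₂ h1 h2)).2
      nlinarith [mul_nonneg hk₁.le habs]
    · rcases le_or_gt 0 y₁ with h1 | h1
      · have hb1 := (abs_le.mp (hA2ii y₁ 0 z₂ h1 le_rfl)).2
        have hb2 := hA2i 0 y₂ z₂ le_rfl h2.le
        rw [if_pos (by linarith : (0:ℝ) < 0 - y₂), one_mul] at hb2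
        have e1 : |y₁ - (0:ℝ)| = y₁ := by rw [sub_zero, abs_of_nonneg h1]
        have e2 : |(0:ℝ) - y₂| = -y₂ := by rw [zero_sub, abs_of_pos (by linarith)]
        have e3 : |y₁ - y₂| = y₁ - y₂ := abs_of_pos (by linarith)
        rw [e1] at hb1; rw [e2] at hb2; rw [e3]
        nlinarith [mul_nonneg hk₁.le h1, mul_nonneg hk₂.le (by linarith : (0:ℝ) ≤ -y₂)]
      · have hyy : y₂ < y₁ := by
          linarith [mul_pos hs (neg_pos.mpr h2)]
        have h := hA2i y₁ y₂ z₂ h1.le h2.le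
        rw [if_pos (by linarith : (0:ℝ) < y₁ - y₂), one_mul] at h
        nlinarith [mul_nonneg hk₂.le habs]
  -- Step 2 : the z-increment
  have hmono := (hA6ii y₁).2
  have hanti := (hA6ii y₁).1
  have hZ : g y₁ z₁ - g y₁ z₂ ≤ cb * (|z₁ - θ * z₂| + (1 - θ) * a) := by
    have hwa : (0:ℝ) ≤ |z₁ - θ * z₂| + (1 - θ) * a := by positivity
    have hwab : cb * (|z₁ - θ * z₂| + (1 - θ) * a)
        = cb * |z₁ - θ * z₂| + cb * ((1 - θ) * a) := by ring
    have haux : (0:ℝ) ≤ cb * ((1 - θ) * a) := mul_nonneg hcb (mul_nonneg hs.le ha)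
    rcases le_or_gt z₂ (-a) with hc | hc
    · -- z₂ ≤ -a
      rcases le_or_gt z₁ z₂ with hd | hd
      · -- z₁ ≤ z₂ : Lipschitz with small gap
        have h2 : (1 - θ) * z₂ ≤ 0 :=
          mul_nonpos_iff.mpr (Or.inl ⟨hs.le, by linarith⟩)
        have hgap : z₂ - z₁ ≤ |z₁ - θ * z₂| := by
          have := neg_le_abs (z₁ - θ * z₂)
          linarith
        have hl := (abs_le.mp (hA6i y₁ z₁ z₂)).2
        rw [abs_sub_comm, abs_of_nonneg (by linarith : (0:ℝ) ≤ z₂ - z₁)] at hl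
        have hm := mul_le_mul_of_nonneg_left hgap hcb
        rw [hwab]; linarith
      · rcases le_or_gt z₁ (-a) with he | he
        · -- z₂ < z₁ ≤ -a : antitone gives ≤ 0
          have hle := hanti (Set.mem_Iic.mpr hc) (Set.mem_Iic.mpr he) hd.le
          linarith [mul_nonneg hcb hwa]
        · -- -a < z₁ : pass through -a
          have h1 : g y₁ z₁ - g y₁ (-a) ≤ cb * (z₁ + a) := by
            have hl := (abs_le.mp (hA6i y₁ z₁ (-a))).2
            rw [show z₁ - -a = z₁ + a by ring,
              abs_of_pos (by linarith : (0:ℝ) < z₁ + a)] at hl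
            exact hl
          have h2 : g y₁ (-a) ≤ g y₁ z₂ :=
            hanti (Set.mem_Iic.mpr hc) (Set.mem_Iic.mpr le_rfl) hc
          have h3 : z₁ + a ≤ |z₁ - θ * z₂| + (1 - θ) * a := by
            have hm := mul_le_mul_of_nonneg_left hc hθ0.le
            have := le_abs_self (z₁ - θ * z₂)
            nlinarith
          have := mul_le_mul_of_nonneg_left h3 hcb
          linarith
    · rcases le_or_gt z₂ a with hc2 | hc2
      · -- |z₂| ≤ a : plain Lipschitz
        have hl := (abs_le.mp (hA6i y₁ z₁ z₂)).2
        have htri : |z₁ - z₂| ≤ |z₁ - θ * z₂| + (1 - θ) * a := by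
          have h1 : |z₁ - z₂| ≤ |z₁ - θ * z₂| + |θ * z₂ - z₂| := abs_sub_le _ _ _
          have h2 : |θ * z₂ - z₂| = (1 - θ) * |z₂| := by
            rw [show θ * z₂ - z₂ = -((1 - θ) * z₂) by ring, abs_neg, abs_mul,
              abs_of_pos hs]
          rw [h2] at h1
          have h3 : |z₂| ≤ a := abs_le.mpr ⟨by linarith, hc2⟩
          have h4 := mul_le_mul_of_nonneg_left h3 hs.le
          linarith
        have := mul_le_mul_of_nonneg_left htri hcb
        linarith
      · -- z₂ > a
        rcases le_or_gt z₂ z₁ with hd | hd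
        · have h2 : (0:ℝ) ≤ (1 - θ) * z₂ := mul_nonneg hs.le (by linarith)
          have hgap : z₁ - z₂ ≤ |z₁ - θ * z₂| := by
            have := le_abs_self (z₁ - θ * z₂)
            linarith
          have hl := (abs_le.mp (hA6i y₁ z₁ z₂)).2
          rw [abs_of_nonneg (by linarith : (0:ℝ) ≤ z₁ - z₂)] at hl
          have hm := mul_le_mul_of_nonneg_left hgap hcb
          rw [hwab]; linarith
        · rcases le_or_gt a z₁ with he | he
          · -- a ≤ z₁ < z₂ : monotone gives ≤ 0
            have hle := hmono (Set.mem_Ici.mpr he) (Set.mem_Ici.mpr hc2.le) hd.le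
            linarith [mul_nonneg hcb hwa]
          · -- z₁ < a : pass through a
            have h1 : g y₁ z₁ - g y₁ a ≤ cb * (a - z₁) := by
              have hl := (abs_le.mp (hA6i y₁ z₁ a)).2
              rw [abs_of_neg (by linarith : z₁ - a < 0)] at hl
              linarith
            have h2 : g y₁ a ≤ g y₁ z₂ :=
              hmono (Set.mem_Ici.mpr le_rfl) (Set.mem_Ici.mpr hc2.le) hc2.le
            have h3 : a - z₁ ≤ |z₁ - θ * z₂| + (1 - θ) * a := by
              have hm := mul_le_mul_of_nonneg_left hc2.le hθ0.le
              have := neg_le_abs (z₁ - θ * z₂)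
              nlinarith
            have := mul_le_mul_of_nonneg_left h3 hcb
            linarith
  -- Step 3 : growth of g at (y₂, z₂)
  have hG : g y₂ z₂ ≤ f + ub * |y₂| + vb * L2 :=
    le_trans (le_abs_self _) (hA5 y₂ z₂)
  -- auxiliary bounds
  have hTα : T ≤ T ^ α + 1 := by
    rcases le_or_gt T 1 with h | h
    · have : (0:ℝ) ≤ T ^ α := Real.rpow_nonneg hTnn α
      linarith
    · have h1 : T ^ (1:ℝ) ≤ T ^ α := Real.rpow_le_rpow_of_exponent_le h.le hα.1.le
      rw [Real.rpow_one] at h1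
      linarith
  have hyd : |y₁ - y₂| ≤ (1 - θ) * Dy + (1 - θ) * |y₂| := by
    have h1 : |y₁ - y₂| ≤ |y₁ - θ * y₂| + |θ * y₂ - y₂| := abs_sub_le _ _ _
    have h2 : |θ * y₂ - y₂| = (1 - θ) * |y₂| := by
      rw [show θ * y₂ - y₂ = -((1 - θ) * y₂) by ring, abs_neg, abs_mul,
        abs_of_pos hs]
    rw [h2, hwy] at h1
    linarith
  have hLa : (0:ℝ) ≤ La := by
    rw [hLadef]
    exact Real.rpow_nonneg
      (Real.log_nonneg (by nlinarith [Real.add_one_le_exp (1:ℝ)])) _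
  have hTαnn : (0:ℝ) ≤ T ^ α := Real.rpow_nonneg hTnn α
  -- assemble
  have key : g y₁ z₁ - θ * g y₂ z₂ ≤
      cb * ((1 - θ) * T) + cb * ((1 - θ) * a)
        + (k₁ + k₂) * ((1 - θ) * Dy + (1 - θ) * |y₂|)
        + (1 - θ) * (f + ub * |y₂| + vb * L2) := by
    have h2 := mul_le_mul_of_nonneg_left hyd hk
    have h3 := mul_le_mul_of_nonneg_left hG hs.le
    rw [hw] at hZ
    have hZ' : g y₁ z₁ - g y₁ z₂ ≤ cb * ((1 - θ) * T) + cb * ((1 - θ) * a) := by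
      have : cb * ((1 - θ) * T + (1 - θ) * a)
          = cb * ((1 - θ) * T) + cb * ((1 - θ) * a) := by ring
      linarith [this ▸ hZ]
    linarith
  have hTT : cb * ((1 - θ) * T) ≤ cb * ((1 - θ) * (T ^ α + 1)) :=
    mul_le_mul_of_nonneg_left (mul_le_mul_of_nonneg_left hTα hs.le) hcb
  have inner : cb * (T ^ α + 1) + cb * a + (k₁ + k₂) * (Dy + |y₂|)
      + (f + ub * |y₂| + vb * L2) ≤
      (12 * f + 11 * vb * La + 4 * cb * a + 4 * cb)
        + (k₁ + k₂ + 12 * ub) * |y₂| + vb * L2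
        + (k₁ + k₂ + 12 * ub) * Dy + 4 * cb * T ^ α := by
    nlinarith [mul_nonneg hvb hLa, mul_nonneg hcb ha,
      mul_nonneg hub (abs_nonneg y₂), mul_nonneg hub hDynn,
      mul_nonneg hcb hTαnn]
  have hfin := mul_le_mul_of_nonneg_left inner hs.le
  have hexp : (1 - θ) * (cb * (T ^ α + 1) + cb * a + (k₁ + k₂) * (Dy + |y₂|)
      + (f + ub * |y₂| + vb * L2))
      = cb * ((1 - θ) * (T ^ α + 1)) + cb * ((1 - θ) * a)
        + (k₁ + k₂) * ((1 - θ) * Dy + (1 - θ) * |y₂|)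
        + (1 - θ) * (f + ub * |y₂| + vb * L2) := by ring
  rw [hexp] at hfin
  linarith
end
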